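/- arXiv:2602.23549 — 5 statements merged into one kernel-verified Lean document; each statement's English description precedes it below -/
import Mathlib

section
/- Fix α > 0, δ ∈ (0,1/3) and b ≥ 1. Define f̃(x,y) = −y·f(x/y) for real x ≥ 0, y > 0. There exist constants D > 0 and N₀ ≥ 1 such that for all integers N ≥ N₀ and all integers x̃, s̃, ỹ, t̃ satisfying |x̃ − s̃ − N^{2/3+δ}| ≤ b·N^{2/3}, |ỹ − t̃ − N^{2/3+δ}| ≤ b·N^{2/3}, and N/b ≤ t̃ − s̃ ≤ 4bN, one has −(t̃ + ỹ − s̃ − x̃)·Ψ0(α) ≥ 4D·N^{1/3+2δ} + max over integers i with max{x̃, s̃} ≤ i ≤ min{ỹ, t̃} of [ f̃(i − x̃, i − s̃) + f̃(t̃ − i, ỹ − i) ]. -/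
open MeasureTheory ProbabilityTheory Real

noncomputable section

/-- The lattice point reached after the first `k` steps of the up-right step sequence `s`
(`true` = right step, `false` = up step) started at `a`. -/
def vert (a : ℤ × ℤ) {n : ℕ} (s : Fin n → Bool) (k : ℕ) : ℤ × ℤ :=
  (a.1 + ((List.ofFn s).take k).count true, a.2 + ((List.ofFn s).take k).count false)

/-- The number of steps of an up-right path from `a` to `b`. -/
def numSteps (a b : ℤ × ℤ) : ℕ := (b.1 - a.1 + (b.2 - a.2)).toNat

/-- Up-right paths from `a` to `b`, encoded by their step sequences. -/
def pathSet (a b : ℤ × ℤ) : Finset (Fin (numSteps a b) → Bool) :=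
  Finset.univ.filter (fun s => vert a s (numSteps a b) = b)

/-- The product of the weights along a path. -/
def pathWeight (w : ℤ × ℤ → ℝ) (a : ℤ × ℤ) {n : ℕ} (s : Fin n → Bool) : ℝ :=
  ∏ k ∈ Finset.range (n + 1), w (vert a s k)

/-- Full-space partition function. -/
def Zfull (w : ℤ × ℤ → ℝ) (a b : ℤ × ℤ) : ℝ :=
  ∑ s ∈ pathSet a b, pathWeight w a s

open Classical in
/-- Partition function over paths staying in `S`. -/
def Zin (w : ℤ × ℤ → ℝ) (a b : ℤ × ℤ) (S : Set (ℤ × ℤ)) : ℝ :=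
  ∑ s ∈ (pathSet a b).filter (fun s => ∀ k ≤ numSteps a b, vert a s k ∈ S),
    pathWeight w a s

open Classical in
/-- Partition function over paths that exit `S`. -/
def Zout (w : ℤ × ℤ → ℝ) (a b : ℤ × ℤ) (S : Set (ℤ × ℤ)) : ℝ :=
  ∑ s ∈ (pathSet a b).filter (fun s => ∃ k ≤ numSteps a b, vert a s k ∉ S),
    pathWeight w a s

/-- The discrete half-space. -/
def halfSpace : Set (ℤ × ℤ) := {p | p.2 ≤ p.1}

/-- Half-space partition function. -/
def Zhalf (w : ℤ × ℤ → ℝ) (a b : ℤ × ℤ) : ℝ := Zin w a b halfSpace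

open Classical in
/-- Partition function over paths staying in the half-space and touching the diagonal. -/
def ZhalfTouch (w : ℤ × ℤ → ℝ) (a b : ℤ × ℤ) : ℝ :=
  ∑ s ∈ (pathSet a b).filter
      (fun s => (∀ k ≤ numSteps a b, vert a s k ∈ halfSpace) ∧
        ∃ k ≤ numSteps a b, (vert a s k).1 = (vert a s k).2),
    pathWeight w a s

/-- The parallelogram with vertices `a ± (-k, k)`, `b ± (-k, k)`. -/
def para (a b : ℤ × ℤ) (k : ℝ) : Set (ℤ × ℤ) :=
  {p | ∃ t u : ℝ, t ∈ Set.Icc (0:ℝ) 1 ∧ u ∈ Set.Icc (-k) k ∧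
    (p.1 : ℝ) = a.1 + t * (b.1 - a.1) - u ∧ (p.2 : ℝ) = a.2 + t * (b.2 - a.2) + u}

/-- The digamma function. -/
def Psi0 (x : ℝ) : ℝ := deriv (fun y => Real.log (Real.Gamma y)) x

/-- The trigamma function. -/
def Psi1 (x : ℝ) : ℝ := deriv Psi0 x

/-- The slope function `g(x) = Ψ₁(2α - x)/Ψ₁(x)`. -/
def gfun (α : ℝ) (x : ℝ) : ℝ := Psi1 (2*α - x) / Psi1 x

/-- The inverse of `g` on `(0, 2α)`. -/
def ginv (α : ℝ) : ℝ → ℝ := Function.invFunOn (gfun α) (Set.Ioo 0 (2*α))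

/-- The shape function `f`. -/
def fShape (α : ℝ) (x : ℝ) : ℝ :=
  if x = 0 then Psi0 (2*α) else x * Psi0 (ginv α x) + Psi0 (2*α - ginv α x)

/-- The rescaled two-variable shape function `f̃(x,y) = -y f(x/y)`. -/
def ftilde (α : ℝ) (x y : ℝ) : ℝ := -y * fShape α (x / y)

/-- The shape function `F`. -/
def Fshape (α ζ : ℝ) : ℝ :=
  -(Psi1 (2*α - ζ) * Psi0 ζ + Psi1 ζ * Psi0 (2*α - ζ)) / (Psi1 ζ + Psi1 (2*α - ζ))

/-- `X` is an inverse-gamma random variable with parameter `β`: `1/X` has the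
Gamma distribution with shape `β` and rate `1`. -/
def IsInvGamma {Ω : Type*} [MeasurableSpace Ω] (μ : Measure Ω) (X : Ω → ℝ) (β : ℝ) : Prop :=
  Measurable X ∧ Measure.map (fun ω => (X ω)⁻¹) μ = ProbabilityTheory.gammaMeasure β 1

end


namespace SGaux

noncomputable section
/-- trigamma series -/
def Tg (x : ℝ) : ℝ := ∑' n : ℕ, 1/(x+n)^2
/-- majorant series -/
def Kg (x : ℝ) : ℝ := ∑' n : ℕ, 1/(x+n)^3
/-- digamma series -/
def Dg (x : ℝ) : ℝ :=
  -Real.eulerMascheroniConstant + ∑' n : ℕ, (1/(n+1) - 1/(x+n))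
end

lemma pos_aux {x : ℝ} (hx : 0 < x) (n : ℕ) : 0 < x + n := by positivity

lemma ratio_bound {x y : ℝ} (hx : 0 < x) (hy : 0 < y) (n : ℕ) :
    1/(y+n) ≤ max 1 (x/y) * (1/(x+n)) := by
  have hxn := pos_aux hx n
  have hyn := pos_aux hy n
  rcases le_total x y with h | h
  · have h1 : 1/(y+n) ≤ 1/(x+n) := by
      apply one_div_le_one_div_of_le hxn; linarith
    have h2 : (1:ℝ) ≤ max 1 (x/y) := le_max_left _ _
    nlinarith [one_div_pos.2 hxn]
  · have hmax : max 1 (x/y) = x/y := max_eq_right (by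
      rw [le_div_iff₀ hy]; linarith)
    rw [hmax, show x/y * (1/(x+(n:ℝ))) = x/(y*(x+n)) by field_simp,
      div_le_div_iff₀ hyn (by positivity)]
    nlinarith [Nat.cast_nonneg (α := ℝ) n]

lemma summable_inv_sq {x : ℝ} (hx : 0 < x) : Summable (fun n : ℕ => 1/(x+n)^2) := by
  have base : Summable (fun n : ℕ => 1/((n:ℝ)+1)^2) := by
    have : Summable (fun n : ℕ => 1/((n:ℝ))^2) := by
      rw [Real.summable_one_div_nat_pow]
      norm_num
    have := (summable_nat_add_iff 1).mpr this
    simpa using this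
  have base2 : Summable (fun n : ℕ => (max 1 (1/x))^2 * (1/((n:ℝ)+1)^2)) :=
    base.mul_left _
  refine Summable.of_nonneg_of_le (fun n => by positivity) (fun n => ?_) base2
  have h := ratio_bound (x := 1) (y := x) one_pos hx n
  have h1n : (0:ℝ) < 1 + n := by positivity
  have hxn := pos_aux hx n
  have h0 : 0 ≤ 1/(x+n) := by positivity
  have hxn' : (x+(n:ℝ)) ≠ 0 := hxn.ne'
  have h1n' : (1+(n:ℝ)) ≠ 0 := h1n.ne'
  calc 1/(x+n)^2 = (1/(x+n)) * (1/(x+n)) := by field_simp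
    _ ≤ (max 1 (1/x) * (1/(1+n))) * (max 1 (1/x) * (1/(1+n))) := by
        apply mul_le_mul _ _ h0 (by positivity)
        · simpa [one_div] using h
        · simpa [one_div] using h
    _ = (max 1 (1/x))^2 * (1/((n:ℝ)+1)^2) := by field_simp; ring

lemma summable_prod {x y : ℝ} (hx : 0 < x) (hy : 0 < y) :
    Summable (fun n : ℕ => 1/((x+n)*(y+n))) := by
  have base2 : Summable (fun n : ℕ => max 1 (x/y) * (1/(x+n)^2)) :=
    (summable_inv_sq hx).mul_left _
  refine Summable.of_nonneg_of_le
    (fun n => by have := pos_aux hx n; have := pos_aux hy n; positivity)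
    (fun n => ?_) base2
  have h := ratio_bound hx hy n
  have hxn := pos_aux hx n
  have hyn := pos_aux hy n
  have hxn' : (x+(n:ℝ)) ≠ 0 := hxn.ne'
  have hyn' : (y+(n:ℝ)) ≠ 0 := hyn.ne'
  calc 1/((x+n)*(y+n)) = (1/(y+n)) * (1/(x+n)) := by field_simp
    _ ≤ (max 1 (x/y) * (1/(x+n))) * (1/(x+n)) := by
        apply mul_le_mul_of_nonneg_right h (by positivity)
    _ = max 1 (x/y) * (1/(x+n)^2) := by rw [mul_assoc, one_div_mul_one_div, ← sq]

lemma summable_prod3 {x y : ℝ} (hx : 0 < x) (hy : 0 < y) :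
    Summable (fun n : ℕ => 1/((x+n)^2*(y+n))) := by
  have base2 : Summable (fun n : ℕ => (1/y) * (1/(x+n)^2)) :=
    (summable_inv_sq hx).mul_left _
  refine Summable.of_nonneg_of_le
    (fun n => by have := pos_aux hx n; have := pos_aux hy n; positivity)
    (fun n => ?_) base2
  have hxn := pos_aux hx n
  have hyn := pos_aux hy n
  have hxn' : (x+(n:ℝ)) ≠ 0 := hxn.ne'
  have hyn' : (y+(n:ℝ)) ≠ 0 := hyn.ne'
  have h1 : 1/(y+n) ≤ 1/y := by
    apply one_div_le_one_div_of_le hy; simp [Nat.cast_nonneg]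
  calc 1/((x+n)^2*(y+n)) = (1/(y+n)) * (1/(x+n)^2) := by field_simp
    _ ≤ (1/y) * (1/(x+n)^2) := by apply mul_le_mul_of_nonneg_right h1 (by positivity)

lemma summable_cube {x : ℝ} (hx : 0 < x) : Summable (fun n : ℕ => 1/(x+n)^3) := by
  have := summable_prod3 hx hx
  apply this.congr
  intro n; ring_nf


lemma Tg_pos {x : ℝ} (hx : 0 < x) : 0 < Tg x :=
  Summable.tsum_pos (summable_inv_sq hx) (fun n => by have := pos_aux hx n; positivity) 0
    (by have := pos_aux hx 0; positivity)

lemma Tg_ge {x : ℝ} (hx : 0 < x) : 1/x^2 ≤ Tg x := by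
  have h := Summable.le_tsum (summable_inv_sq hx) 0
    (fun j _ => by have := pos_aux hx j; positivity)
  simpa [Tg] using h

lemma Tg_anti_lt {x y : ℝ} (hx : 0 < x) (hxy : x < y) : Tg y < Tg x := by
  apply Summable.tsum_lt_tsum (i := 0)
    (fun n => by
      have h1 := pos_aux hx n; have h2 := pos_aux (hx.trans hxy) n
      apply one_div_le_one_div_of_le (by positivity)
      nlinarith)
    _ (summable_inv_sq (hx.trans hxy)) (summable_inv_sq hx)
  have h1 := pos_aux hx 0; have h2 := pos_aux (hx.trans hxy) 0
  apply one_div_lt_one_div_of_lt (by positivity)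
  nlinarith

lemma Tg_anti_le {x y : ℝ} (hx : 0 < x) (hxy : x ≤ y) : Tg y ≤ Tg x := by
  rcases eq_or_lt_of_le hxy with h | h
  · rw [h]
  · exact (Tg_anti_lt hx h).le

lemma dg_term_summable {x : ℝ} (hx : 0 < x) :
    Summable (fun n : ℕ => 1/((n:ℝ)+1) - 1/(x+n)) := by
  apply ((summable_prod one_pos hx).mul_left (x-1)).congr
  intro n
  have h1 := pos_aux hx n
  have h2 : ((n:ℝ)+1) ≠ 0 := by positivity
  field_simp
  ring

lemma Dg_sub {a b : ℝ} (ha : 0 < a) (hb : 0 < b) :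
    Dg a - Dg b = (a-b) * ∑' n : ℕ, 1/((a+n)*(b+n)) := by
  have h1 := dg_term_summable ha
  have h2 := dg_term_summable hb
  have key : Dg a - Dg b
      = ∑' n : ℕ, ((1/((n:ℝ)+1) - 1/(a+n)) - (1/((n:ℝ)+1) - 1/(b+n))) := by
    rw [Summable.tsum_sub h1 h2]; simp only [Dg]; ring
  rw [key, ← tsum_mul_left]
  congr 1; funext n
  have ha' := (pos_aux ha n).ne'
  have hb' := (pos_aux hb n).ne'
  field_simp
  ring

lemma Dg_mono {a b : ℝ} (ha : 0 < a) (hb : 0 < b) (hab : a ≤ b) : Dg a ≤ Dg b := by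
  have h := Dg_sub hb ha
  have hpos : 0 ≤ ∑' n : ℕ, 1/((b+n)*(a+n)) :=
    tsum_nonneg (fun n => by have := pos_aux ha n; have := pos_aux hb n; positivity)
  nlinarith

lemma telescope {x : ℝ} (hx : 0 < x) :
    HasSum (fun n : ℕ => 1/(x+n) - 1/(x+(n+1:ℕ))) (1/x) := by
  have hcongr : ∀ n : ℕ, 1/((x+n)*((x+1)+n)) = 1/(x+(n:ℝ)) - 1/(x+((n+1:ℕ):ℝ)) := by
    intro n
    have h1 := (pos_aux hx n).ne'
    have h2 := (pos_aux (by linarith : (0:ℝ) < x+1) n).ne'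
    push_cast
    rw [div_sub_div _ _ h1 (by push_cast at h2 ⊢; linarith)]
    push_cast
    ring_nf
  have hsummable : Summable (fun n : ℕ => 1/(x+(n:ℝ)) - 1/(x+((n+1:ℕ):ℝ))) :=
    ((summable_prod hx (by linarith : (0:ℝ) < x+1))).congr hcongr
  rw [hsummable.hasSum_iff_tendsto_nat]
  have heq : ∀ n : ℕ, ∑ i ∈ Finset.range n, (1/(x+(i:ℝ)) - 1/(x+((i+1:ℕ):ℝ)))
      = 1/(x+(0:ℕ)) - 1/(x+n) := fun n => Finset.sum_range_sub' (fun k => 1/(x+(k:ℝ))) n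
  simp only [heq]
  have hlim : Filter.Tendsto (fun n : ℕ => 1/(x+(n:ℝ))) Filter.atTop (nhds 0) := by
    simp only [one_div]
    exact (Filter.tendsto_atTop_add_const_left Filter.atTop x tendsto_natCast_atTop_atTop).inv_tendsto_atTop
  have := (tendsto_const_nhds (x := 1/(x+((0:ℕ):ℝ)))).sub hlim
  simpa using this

lemma Dg_rec {x : ℝ} (hx : 0 < x) : Dg (x+1) = Dg x + 1/x := by
  have h1 := dg_term_summable (by linarith : (0:ℝ) < x+1)
  have h2 := dg_term_summable hx
  have key : Dg (x+1) - Dg x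
      = ∑' n : ℕ, ((1/((n:ℝ)+1) - 1/((x+1)+n)) - (1/((n:ℝ)+1) - 1/(x+n))) := by
    rw [Summable.tsum_sub h1 h2]; simp only [Dg]; ring
  have key2 : ∀ n : ℕ, ((1/((n:ℝ)+1) - 1/((x+1)+n)) - (1/((n:ℝ)+1) - 1/(x+n)))
      = 1/(x+(n:ℝ)) - 1/(x+((n+1:ℕ):ℝ)) := by
    intro n; push_cast; ring_nf
  rw [funext key2] at key
  rw [(telescope hx).tsum_eq] at key
  linarith

lemma Dg_nat (n : ℕ) : Dg ((n:ℝ)+1) = -Real.eulerMascheroniConstant + (harmonic n : ℝ) := by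
  induction n with
  | zero => simp [Dg, add_comm]
  | succ n ih =>
      have : ((n+1:ℕ):ℝ)+1 = ((n:ℝ)+1)+1 := by push_cast; ring
      rw [this, Dg_rec (by positivity), ih, harmonic_succ]
      push_cast
      ring


open Real Set Filter Topology

local notation "γ" => Real.eulerMascheroniConstant

/-- log Gamma -/
noncomputable def lg : ℝ → ℝ := Real.log ∘ Real.Gamma

lemma lg_diff {x : ℝ} (hx : 0 < x) : DifferentiableAt ℝ lg x := by
  refine ((Real.differentiableAt_Gamma ?_).log (Real.Gamma_ne_zero ?_)) <;>
    exact fun m => ne_of_gt (by have := Nat.cast_nonneg (α := ℝ) m; linarith)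

lemma lg_rec {x : ℝ} (hx : 0 < x) : lg (x+1) = lg x + Real.log x := by
  simp only [lg, Function.comp_apply, Real.Gamma_add_one hx.ne',
    Real.log_mul hx.ne' (Real.Gamma_pos_of_pos hx).ne', add_comm]

lemma dlg_rec {x : ℝ} (hx : 0 < x) : deriv lg (x+1) = deriv lg x + 1/x := by
  rw [← deriv_comp_add_const, one_div, ← Real.deriv_log,
    ← deriv_add (lg_diff hx) (Real.differentiableAt_log hx.ne')]
  apply Filter.EventuallyEq.deriv_eq
  filter_upwards [eventually_gt_nhds hx] using fun y hy => lg_rec hy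

lemma dlg_mono {x y : ℝ} (hx : 0 < x) (hxy : x ≤ y) : deriv lg x ≤ deriv lg y := by
  rcases eq_or_lt_of_le hxy with h | h
  · rw [h]
  · have hc : ConvexOn ℝ (Ioi 0) lg := Real.convexOn_log_Gamma
    calc deriv lg x ≤ slope lg x y :=
          hc.deriv_le_slope (mem_Ioi.2 hx) (mem_Ioi.2 (hx.trans h)) h (lg_diff hx)
      _ ≤ deriv lg y :=
          hc.slope_le_deriv (mem_Ioi.2 hx) (mem_Ioi.2 (hx.trans h)) h (lg_diff (hx.trans h))

lemma dlg_lb (n : ℕ) (hn : 0 < n) : Real.log n ≤ deriv lg (n+1) := by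
  have hc : ConvexOn ℝ (Ioi 0) lg := Real.convexOn_log_Gamma
  refine (le_of_eq ?_).trans <| hc.slope_le_deriv (mem_Ioi.mpr <| Nat.cast_pos.mpr hn)
    (by positivity : (0:ℝ) < n + 1) (by have h0 : (0:ℝ) < n := Nat.cast_pos.mpr hn; linarith)
    (lg_diff (by positivity))
  rw [slope_def_field, show (n:ℝ) + 1 - n = (1 : ℝ) by ring, div_one,
    lg_rec (by exact_mod_cast hn), add_sub_cancel_left]

lemma dlg_ub (n : ℕ) : deriv lg (n+1) ≤ Real.log (n+1) := by
  have hc : ConvexOn ℝ (Ioi 0) lg := Real.convexOn_log_Gamma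
  refine (hc.deriv_le_slope (by positivity : (0:ℝ) < n + 1)
      (by positivity : (0:ℝ) < n + 2) (by linarith) (lg_diff (by positivity))).trans
    (le_of_eq ?_)
  rw [slope_def_field, show (n:ℝ) + 2 - (n + 1) = (1 : ℝ) by ring, div_one,
    show (n:ℝ) + 2 = (n + 1) + (1 : ℝ) by ring, lg_rec (by positivity), add_sub_cancel_left]

lemma lim_logdiff (c : ℕ) :
    Tendsto (fun n : ℕ => Real.log ((n:ℝ)+c) - Real.log n) atTop (𝓝 0) := by
  apply squeeze_zero' (g := fun n : ℕ => (c:ℝ)/n)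
  · filter_upwards [eventually_ge_atTop 1] with n hn
    have h1 : (1:ℝ) ≤ (n:ℝ) := by exact_mod_cast hn
    apply sub_nonneg.2
    have hc0 : (0:ℝ) ≤ c := Nat.cast_nonneg c
    have : Real.log (n:ℝ) ≤ Real.log ((n:ℝ)+c) := by gcongr <;> linarith
    linarith
  · filter_upwards [eventually_ge_atTop 1] with n hn
    have h1 : (1:ℝ) ≤ (n:ℝ) := by exact_mod_cast hn
    have hn0 : (0:ℝ) < n := by linarith
    have hnc : (0:ℝ) < (n:ℝ)+c := by positivity
    rw [← Real.log_div hnc.ne' hn0.ne']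
    calc Real.log (((n:ℝ)+c)/n) ≤ ((n:ℝ)+c)/n - 1 :=
          Real.log_le_sub_one_of_pos (by positivity)
      _ = (c:ℝ)/n := by field_simp; ring
  · exact tendsto_const_div_atTop_nhds_zero_nat (c:ℝ)

lemma lim_low (m : ℕ) :
    Tendsto (fun k : ℕ => Real.log ((k:ℝ)+1) + γ - (harmonic (k+1+m) : ℝ)) atTop (𝓝 0) := by
  have h1 := Real.tendsto_harmonic_sub_log.comp (tendsto_add_atTop_nat (1+m))
  have h2 := (lim_logdiff m).comp (tendsto_add_atTop_nat 1)
  have h3 := (tendsto_const_nhds (x := γ)).sub (h1.add h2)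
  rw [show γ - (γ + 0) = 0 by ring] at h3
  refine Filter.Tendsto.congr (fun k => ?_) h3
  simp only [Function.comp_apply]
  have hk : k+(1+m) = k+1+m := by omega
  rw [hk]
  push_cast
  ring_nf

lemma lim_up (m : ℕ) :
    Tendsto (fun k : ℕ => Real.log ((k:ℝ)+2+m) + γ - (harmonic (k+1) : ℝ)) atTop (𝓝 0) := by
  have h1 := Real.tendsto_harmonic_sub_log.comp (tendsto_add_atTop_nat 1)
  have h2 := (lim_logdiff (m+1)).comp (tendsto_add_atTop_nat 1)
  have h3 := h2.add ((tendsto_const_nhds (x := γ)).sub h1)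
  rw [show 0 + (γ - γ) = 0 by ring] at h3
  refine Filter.Tendsto.congr (fun k => ?_) h3
  simp only [Function.comp_apply]
  push_cast
  ring_nf

theorem psi_eq_Dg {x : ℝ} (hx : 0 < x) : deriv lg x = Dg x := by
  have hconst : ∀ n : ℕ, deriv lg x - Dg x = deriv lg (x+n) - Dg (x+n) := by
    intro n
    induction n with
    | zero => simp
    | succ n ih =>
        have hxn : 0 < x + n := pos_aux hx n
        have e1 : deriv lg (x+((n+1:ℕ):ℝ)) = deriv lg (x+n) + 1/(x+n) := by
          push_cast
          rw [show x+((n:ℝ)+1) = (x+(n:ℝ))+1 by ring, dlg_rec hxn]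
        have e2 : Dg (x+((n+1:ℕ):ℝ)) = Dg (x+n) + 1/(x+n) := by
          push_cast
          rw [show x+((n:ℝ)+1) = (x+(n:ℝ))+1 by ring, Dg_rec hxn]
        rw [e1, e2, ih]
        ring
  set m := ⌈x⌉₊ with hm
  have hxm : x ≤ m := Nat.le_ceil x
  have hbound : ∀ k : ℕ,
      Real.log ((k:ℝ)+1) + γ - (harmonic (k+1+m) : ℝ) ≤ deriv lg x - Dg x ∧
      deriv lg x - Dg x ≤ Real.log ((k:ℝ)+2+m) + γ - (harmonic (k+1) : ℝ) := by
    intro k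
    rw [hconst (k+2)]
    have hk2 : (0:ℝ) < ((k+2:ℕ):ℝ) := by positivity
    have hxk : 0 < x + ((k+2:ℕ):ℝ) := by positivity
    constructor
    · have h1 : Real.log ((k:ℝ)+1) ≤ deriv lg (x+((k+2:ℕ):ℝ)) := by
        have ha : Real.log ((k+1:ℕ):ℝ) ≤ deriv lg (((k+1:ℕ):ℝ)+1) := dlg_lb (k+1) (by omega)
        have hb : deriv lg (((k+1:ℕ):ℝ)+1) ≤ deriv lg (x+((k+2:ℕ):ℝ)) := by
          apply dlg_mono (by positivity)
          push_cast; linarith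
        calc Real.log ((k:ℝ)+1) = Real.log ((k+1:ℕ):ℝ) := by push_cast; ring_nf
          _ ≤ _ := ha.trans hb
      have h2 : Dg (x+((k+2:ℕ):ℝ)) ≤ -γ + (harmonic (k+1+m) : ℝ) := by
        rw [← Dg_nat (k+1+m)]
        apply Dg_mono hxk (by positivity)
        push_cast; linarith
      linarith
    · have h1 : deriv lg (x+((k+2:ℕ):ℝ)) ≤ Real.log ((k:ℝ)+2+m) := by
        have hb : deriv lg (x+((k+2:ℕ):ℝ)) ≤ deriv lg (((k+1+m:ℕ):ℝ)+1) := by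
          apply dlg_mono hxk
          push_cast; linarith
        calc deriv lg (x+((k+2:ℕ):ℝ)) ≤ _ := hb
          _ ≤ Real.log (((k+1+m:ℕ):ℝ)+1) := dlg_ub (k+1+m)
          _ = Real.log ((k:ℝ)+2+m) := by push_cast; ring_nf
      have h2 : -γ + (harmonic (k+1) : ℝ) ≤ Dg (x+((k+2:ℕ):ℝ)) := by
        rw [← Dg_nat (k+1)]
        apply Dg_mono (by positivity) hxk
        push_cast; linarith
      linarith
  have hsq : Tendsto (fun _ : ℕ => deriv lg x - Dg x) atTop (𝓝 0) :=
    tendsto_of_tendsto_of_tendsto_of_le_of_le (lim_low m) (lim_up m)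
      (fun k => (hbound k).1) (fun k => (hbound k).2)
  have := tendsto_nhds_unique tendsto_const_nhds hsq
  linarith


open Real Set Filter Topology

/-- key quantitative estimate: the summed slope minus Tg x -/
lemma slope_sum_bound {x y : ℝ} (hx : 0 < x) (hy : x/2 ≤ y) :
    |(∑' n : ℕ, 1/((y+n)*(x+n))) - Tg x| ≤ |y - x| * Kg (x/2) := by
  have hx2 : 0 < x/2 := by linarith
  have hy0 : 0 < y := lt_of_lt_of_le hx2 hy
  have hsum1 := summable_prod hy0 hx
  have hsum2 := summable_inv_sq hx
  have hR : Summable (fun n : ℕ => 1/((x+n)^2*(y+n))) := summable_prod3 hx hy0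
  have key : (∑' n : ℕ, 1/((y+n)*(x+n))) - Tg x
      = (x - y) * ∑' n : ℕ, 1/((x+n)^2*(y+n)) := by
    rw [Tg, ← Summable.tsum_sub hsum1 hsum2, ← tsum_mul_left]
    congr 1; funext n
    have h1 := (pos_aux hx n).ne'
    have h2 := (pos_aux hy0 n).ne'
    field_simp
    ring
  rw [key, abs_mul]
  rw [abs_sub_comm]
  apply mul_le_mul_of_nonneg_left _ (abs_nonneg _)
  rw [abs_of_nonneg (tsum_nonneg (fun n => by
    have := pos_aux hx n; have := pos_aux hy0 n; positivity))]
  apply Summable.tsum_le_tsum _ hR (summable_cube hx2)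
  intro n
  have ha := pos_aux hx n
  have hb := pos_aux hy0 n
  have hm := pos_aux hx2 n
  have hma : x/2 + n ≤ x + n := by linarith
  have hmb : x/2 + n ≤ y + n := by linarith
  rw [div_le_div_iff₀ (by positivity) (by positivity)]
  have hmm : (x/2+(n:ℝ))*(x/2+n) ≤ (x+n)*(x+n) := by nlinarith
  have hmmm : (x/2+(n:ℝ))*(x/2+n)*(x/2+n) ≤ (x+n)*(x+n)*(y+n) :=
    mul_le_mul hmm hmb (le_of_lt hm) (by positivity)
  nlinarith [hmmm]

lemma hasDerivAt_Dg {x : ℝ} (hx : 0 < x) : HasDerivAt Dg (Tg x) x := by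
  rw [hasDerivAt_iff_tendsto_slope, ← tendsto_sub_nhds_zero_iff]
  apply squeeze_zero_norm' (a := fun y => Kg (x/2) * |y - x|)
  · have hball : ∀ᶠ y in 𝓝[≠] x, |y - x| < x/2 := by
      apply Filter.Eventually.filter_mono nhdsWithin_le_nhds
      have : Metric.ball x (x/2) ∈ 𝓝 x := Metric.ball_mem_nhds x (by linarith)
      filter_upwards [this] with y hy
      simpa [Real.dist_eq] using hy
    filter_upwards [hball, self_mem_nhdsWithin] with y hy hy'
    have hyx : y ≠ x := hy'
    have hy2 : x/2 ≤ y := by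
      rcases abs_lt.1 hy with ⟨h1, _⟩; linarith
    have hy0 : 0 < y := by linarith
    have hslope : slope Dg x y = ∑' n : ℕ, 1/((y+n)*(x+n)) := by
      rw [slope_def_field, Dg_sub hy0 hx]
      field_simp [sub_ne_zero.2 hyx]
    rw [Real.norm_eq_abs, hslope, mul_comm]
    exact slope_sum_bound hx hy2
  · have h1 : Tendsto (fun y : ℝ => |y - x|) (𝓝[≠] x) (𝓝 0) := by
      apply Filter.Tendsto.mono_left _ nhdsWithin_le_nhds
      have h2 : Tendsto (fun y : ℝ => y - x) (𝓝 x) (𝓝 (x - x)) :=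
        tendsto_id.sub tendsto_const_nhds
      rw [sub_self] at h2
      simpa using h2.abs
    have := h1.const_mul (Kg (x/2))
    simpa using this

lemma Kg_anti_le {x y : ℝ} (hx : 0 < x) (hxy : x ≤ y) : Kg y ≤ Kg x := by
  apply Summable.tsum_le_tsum _ (summable_cube (hx.trans_le hxy)) (summable_cube hx)
  intro n
  have h1 := pos_aux hx n
  have h2 := pos_aux (hx.trans_le hxy) n
  apply one_div_le_one_div_of_le (by positivity)
  exact pow_le_pow_left₀ (by positivity) (by linarith) 3

lemma Kg_pos {x : ℝ} (hx : 0 < x) : 0 < Kg x :=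
  Summable.tsum_pos (summable_cube hx) (fun n => by have := pos_aux hx n; positivity) 0
    (by have := pos_aux hx 0; positivity)

/-- |Tg y - Tg x| Lipschitz-type bound -/
lemma Tg_lip {x y : ℝ} (hx : 0 < x) (hy : 0 < y) (hxy : x ≤ y) :
    Tg x - Tg y ≤ (y - x) * (2 * Kg x) := by
  have hsx := summable_inv_sq hx
  have hsy := summable_inv_sq hy
  have hq : ∀ n : ℕ, 1/(x+n)^2 - 1/(y+n)^2 ≤ (y-x) * (2 * (1/(x+n)^3)) := by
    intro n
    have ha := pos_aux hx n
    have hb := pos_aux hy n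
    have hab : x + n ≤ y + n := by linarith
    have e : 1/(x+(n:ℝ))^2 - 1/(y+n)^2 = (y-x) * ((x+y+2*n)/((x+n)^2*(y+n)^2)) := by
      field_simp
      ring
    rw [e]
    apply mul_le_mul_of_nonneg_left _ (by linarith)
    rw [show (2:ℝ)*(1/(x+(n:ℝ))^3) = 2/(x+n)^3 by ring,
      div_le_div_iff₀ (by positivity) (by positivity)]
    have k1 : (x+(n:ℝ))*((x+(n:ℝ))+(y+n)) ≤ 2*((y+n)*(y+n)) := by nlinarith
    nlinarith [mul_le_mul_of_nonneg_left k1 (sq_nonneg (x+(n:ℝ))), sq_nonneg (x+(n:ℝ))]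
  calc Tg x - Tg y = ∑' n : ℕ, (1/(x+n)^2 - 1/(y+n)^2) := (Summable.tsum_sub hsx hsy).symm
    _ ≤ ∑' n : ℕ, (y-x) * (2 * (1/(x+n)^3)) := by
        apply Summable.tsum_le_tsum hq (hsx.sub hsy) (((summable_cube hx).mul_left 2).mul_left (y-x))
    _ = (y - x) * (2 * Kg x) := by rw [tsum_mul_left, tsum_mul_left, Kg]

lemma Tg_anti_le' {x y : ℝ} (hx : 0 < x) (hxy : x ≤ y) : Tg y ≤ Tg x := by
  apply Summable.tsum_le_tsum _ (summable_inv_sq (hx.trans_le hxy)) (summable_inv_sq hx)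
  intro n
  have h1 := pos_aux hx n
  have h2 := pos_aux (hx.trans_le hxy) n
  apply one_div_le_one_div_of_le (by positivity)
  exact pow_le_pow_left₀ (by positivity) (by linarith) 2

lemma Tg_cont {x : ℝ} (hx : 0 < x) : ContinuousAt Tg x := by
  apply continuousAt_of_locally_lipschitz (show (0:ℝ) < x/2 by linarith) (2 * Kg (x/2))
  intro y hy
  simp only [Real.dist_eq] at hy ⊢
  have hy2 : x/2 < y := by
    rcases abs_lt.1 hy with ⟨h1, _⟩; linarith
  have hy0 : 0 < y := by linarith
  have hx2 : (0:ℝ) < x/2 := by linarith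
  rcases le_total y x with h | h
  · rw [abs_of_nonneg (by linarith [Tg_anti_le' hy0 h] : (0:ℝ) ≤ Tg y - Tg x),
      abs_of_nonpos (by linarith : y - x ≤ 0)]
    have h1 := Tg_lip hy0 hx h
    have hk := Kg_anti_le hx2 hy2.le
    have h3 := mul_le_mul_of_nonneg_left hk (show (0:ℝ) ≤ x - y by linarith)
    nlinarith [h1, h3]
  · rw [abs_of_nonpos (by linarith [Tg_anti_le' hx h] : Tg y - Tg x ≤ 0),
      abs_of_nonneg (by linarith : (0:ℝ) ≤ y - x)]
    have h1 := Tg_lip hx hy0 h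
    have hk := Kg_anti_le hx2 (by linarith : x/2 ≤ x)
    have h3 := mul_le_mul_of_nonneg_left hk (show (0:ℝ) ≤ y - x by linarith)
    nlinarith [h1, h3]


open Real Set Filter Topology

lemma Psi0_eq {x : ℝ} (hx : 0 < x) : Psi0 x = Dg x := psi_eq_Dg hx

lemma Psi1_eq {x : ℝ} (hx : 0 < x) : Psi1 x = Tg x := by
  have hev : Psi0 =ᶠ[𝓝 x] Dg := by
    filter_upwards [eventually_gt_nhds hx] with y hy using Psi0_eq hy
  rw [Psi1, hev.deriv_eq, (hasDerivAt_Dg hx).deriv]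

lemma gfun_eq {α x : ℝ} (hα : 0 < α) (hx : x ∈ Ioo 0 (2*α)) :
    gfun α x = Tg (2*α-x) / Tg x := by
  rw [gfun, Psi1_eq hx.1, Psi1_eq (by linarith [hx.2] : (0:ℝ) < 2*α - x)]

lemma gfun_exists {α r : ℝ} (hα : 0 < α) (hr0 : 0 < r) (hr1 : r ≤ 1) :
    ∃ ζ ∈ Set.Ioo 0 (2*α), gfun α ζ = r := by
  have hTα := Tg_pos hα
  set v := r / Tg α with hv
  have hv0 : 0 < v := by positivity
  set ζ1 := min α (Real.sqrt v) with hζ1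
  have hζ10 : 0 < ζ1 := lt_min hα (Real.sqrt_pos.2 hv0)
  have hζ1α : ζ1 ≤ α := min_le_left _ _
  have hsq : ζ1^2 ≤ v := by
    have h1 : ζ1 ≤ Real.sqrt v := min_le_right _ _
    calc ζ1^2 ≤ (Real.sqrt v)^2 := by nlinarith [Real.sqrt_nonneg v]
      _ = v := Real.sq_sqrt hv0.le
  have hTζ1 : Tg α / r ≤ Tg ζ1 := by
    have h2 := Tg_ge hζ10
    have h3 : Tg α / r ≤ 1/ζ1^2 := by
      rw [div_le_div_iff₀ hr0 (by positivity)]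
      have : Tg α * ζ1^2 ≤ Tg α * v := by nlinarith
      have hrv : Tg α * v = r := by rw [hv]; field_simp
      linarith
    linarith
  have hsub : Set.Icc ζ1 α ⊆ Set.Ioo 0 (2*α) := fun t ht =>
    ⟨lt_of_lt_of_le hζ10 ht.1, by have := ht.2; linarith⟩
  have hcont : ContinuousOn (gfun α) (Set.Icc ζ1 α) := by
    intro t ht
    have ht' := hsub ht
    have h2t : 0 < 2*α - t := by linarith [ht'.2]
    have hc1 : ContinuousAt (fun s => Tg (2*α - s)) t :=
      (Tg_cont h2t).comp ((continuous_const.sub continuous_id).continuousAt)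
    have hc2 : ContinuousAt Tg t := Tg_cont ht'.1
    have hdiv : ContinuousAt (fun s => Tg (2*α-s)/Tg s) t := hc1.div hc2 (Tg_pos ht'.1).ne'
    have hev : (fun s => Tg (2*α-s)/Tg s) =ᶠ[𝓝 t] gfun α := by
      filter_upwards [Ioo_mem_nhds ht'.1 ht'.2] with s hs
      rw [gfun_eq hα hs]
    exact (hdiv.congr hev).continuousWithinAt
  have hgα : gfun α α = 1 := by
    rw [gfun_eq hα ⟨hα, by linarith⟩, show 2*α - α = α by ring]
    field_simp
  have hgζ1 : gfun α ζ1 ≤ r := by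
    rw [gfun_eq hα (hsub ⟨le_refl _, hζ1α⟩)]
    have hnum : Tg (2*α - ζ1) ≤ Tg α := Tg_anti_le' hα (by linarith)
    have hden : 0 < Tg α / r := by positivity
    calc Tg (2*α-ζ1)/Tg ζ1 ≤ Tg α / (Tg α / r) :=
          div_le_div₀ hTα.le hnum hden hTζ1
      _ = r := by field_simp
  have hr_mem : r ∈ Set.Icc (gfun α ζ1) (gfun α α) := ⟨hgζ1, by rw [hgα]; exact hr1⟩
  obtain ⟨ζ, hζmem, hζeq⟩ := intermediate_value_Icc hζ1α hcont hr_mem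
  exact ⟨ζ, hsub hζmem, hζeq⟩

lemma ginv_spec {α r : ℝ} (hα : 0 < α) (hr0 : 0 < r) (hr1 : r ≤ 1) :
    ginv α r ∈ Set.Ioo 0 (2*α) ∧ gfun α (ginv α r) = r :=
  ⟨Function.invFunOn_mem (gfun_exists hα hr0 hr1),
   Function.invFunOn_eq (gfun_exists hα hr0 hr1)⟩

lemma phi_le {α r ζ ξ : ℝ} (hα : 0 < α) (hr0 : 0 ≤ r) (hζ : ζ ∈ Ioo 0 (2*α))
    (hξ : ξ ∈ Ioo 0 (2*α)) (hcrit : Tg (2*α-ζ) = r * Tg ζ) :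
    r * Dg ξ + Dg (2*α-ξ) ≤ r * Dg ζ + Dg (2*α-ζ) := by
  set φ : ℝ → ℝ := fun t => r * Dg t + Dg (2*α-t) with hφ
  set φ' : ℝ → ℝ := fun t => r * Tg t - Tg (2*α-t) with hφ'
  have hder : ∀ t ∈ Ioo 0 (2*α), HasDerivAt φ (φ' t) t := by
    intro t ht
    have h1 := (hasDerivAt_Dg ht.1).const_mul r
    have h2 : HasDerivAt (fun s : ℝ => Dg (2*α-s)) (-Tg (2*α-t)) t := by
      have inner : HasDerivAt (fun s : ℝ => 2*α - s) (-1) t := by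
        simpa using (hasDerivAt_id t).const_sub (2*α)
      have := (hasDerivAt_Dg (show (0:ℝ) < 2*α-t by linarith [ht.2])).comp t inner
      simpa [Function.comp_def] using this
    have h3 := h1.add h2
    have heq : φ' t = r * Tg t + -Tg (2*α-t) := by simp only [hφ']; ring
    rw [heq]
    exact h3
  have hanti : ∀ s t, s ∈ Ioo 0 (2*α) → t ∈ Ioo 0 (2*α) → s < t → φ' t < φ' s := by
    intro s t hs ht hst
    have h1 : Tg t ≤ Tg s := Tg_anti_le' hs.1 hst.le
    have h1' : r * Tg t ≤ r * Tg s := mul_le_mul_of_nonneg_left h1 hr0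
    have h2 : Tg (2*α-s) < Tg (2*α-t) :=
      Tg_anti_lt (by linarith [ht.2]) (by linarith)
    simp only [hφ']
    linarith
  have hφ'ζ : φ' ζ = 0 := by simp only [hφ']; rw [hcrit]; ring
  suffices hsuff : φ ξ ≤ φ ζ by simpa only [hφ] using hsuff
  rcases lt_trichotomy ξ ζ with h | h | h
  · have hIcc : Icc ξ ζ ⊆ Ioo 0 (2*α) := fun t ht =>
      ⟨lt_of_lt_of_le hξ.1 ht.1, lt_of_le_of_lt ht.2 hζ.2⟩
    obtain ⟨c, hc, hceq⟩ := exists_hasDerivAt_eq_slope φ φ' h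
      (fun t ht => ((hder t (hIcc ht)).continuousAt).continuousWithinAt)
      (fun t ht => hder t (hIcc ⟨ht.1.le, ht.2.le⟩))
    have hc2 : c ∈ Ioo 0 (2*α) := hIcc ⟨hc.1.le, hc.2.le⟩
    have hpos : 0 < φ' c := by
      have := hanti c ζ hc2 hζ hc.2
      linarith [hφ'ζ ▸ this]
    rw [eq_div_iff (sub_ne_zero.2 (ne_of_gt h))] at hceq
    nlinarith [mul_pos hpos (sub_pos.2 h)]
  · rw [h]
  · have hIcc : Icc ζ ξ ⊆ Ioo 0 (2*α) := fun t ht =>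
      ⟨lt_of_lt_of_le hζ.1 ht.1, lt_of_le_of_lt ht.2 hξ.2⟩
    obtain ⟨c, hc, hceq⟩ := exists_hasDerivAt_eq_slope φ φ' h
      (fun t ht => ((hder t (hIcc ht)).continuousAt).continuousWithinAt)
      (fun t ht => hder t (hIcc ⟨ht.1.le, ht.2.le⟩))
    have hc2 : c ∈ Ioo 0 (2*α) := hIcc ⟨hc.1.le, hc.2.le⟩
    have hneg : φ' c < 0 := by
      have := hanti ζ c hζ hc2 hc.1
      linarith [hφ'ζ ▸ this]
    rw [eq_div_iff (sub_ne_zero.2 (ne_of_gt h))] at hceq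
    nlinarith [mul_neg_of_neg_of_pos hneg (sub_pos.2 h)]

set_option maxHeartbeats 1000000 in
theorem fShape_gap {α : ℝ} (hα : 0 < α) :
    ∃ c : ℝ, 0 < c ∧ ∀ r : ℝ, 0 ≤ r → r ≤ 1 →
      (1+r) * Psi0 α + c * (1-r)^2 ≤ fShape α r := by
  have hTα := Tg_pos hα
  have hα2 : (0:ℝ) < α/2 := by linarith
  set M := Kg (α/2) with hM
  have hM0 : 0 < M := Kg_pos hα2
  set ε := min (α/2) (Tg α/(4*M)) with hε
  have hε0 : 0 < ε := lt_min hα2 (by positivity)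
  have hεα : ε ≤ α/2 := min_le_left _ _
  have h4M : ε * (4*M) ≤ Tg α := by
    have := min_le_right (α/2) (Tg α/(4*M))
    rw [le_div_iff₀ (by positivity)] at this
    linarith
  refine ⟨ε * Tg α / 2, by positivity, ?_⟩
  intro r hr0 hr1
  set u := ε * (1-r) with hu
  have hu0 : 0 ≤ u := by
    apply mul_nonneg hε0.le; linarith
  have huα : u ≤ α/2 := by
    calc u ≤ ε * 1 := by apply mul_le_mul_of_nonneg_left _ hε0.le; linarith
      _ = ε := mul_one ε
      _ ≤ α/2 := hεα
  have hau : 0 < α - u := by linarith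
  have hau2 : α/2 ≤ α - u := by linarith
  have hpu : 0 < α + u := by linarith
  -- Step 1 : fShape α r ≥ r * Dg (α-u) + Dg (α+u)
  have step1 : r * Dg (α-u) + Dg (α+u) ≤ fShape α r := by
    rcases eq_or_lt_of_le hr0 with h0 | h0
    · rw [← h0, zero_mul, zero_add, fShape, if_pos rfl,
        Psi0_eq (show (0:ℝ) < 2*α by linarith)]
      exact Dg_mono hpu (by linarith) (by linarith)
    · obtain ⟨hmem, heq⟩ := ginv_spec hα h0 hr1
      have hcrit : Tg (2*α - ginv α r) = r * Tg (ginv α r) := by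
        rw [gfun_eq hα hmem] at heq
        exact (div_eq_iff (Tg_pos hmem.1).ne').1 heq
      have hξ : (α-u) ∈ Ioo 0 (2*α) := ⟨hau, by linarith⟩
      have hle := phi_le hα hr0 hmem hξ hcrit
      rw [show 2*α-(α-u) = α+u by ring] at hle
      rw [fShape, if_neg (ne_of_gt h0), Psi0_eq hmem.1,
        Psi0_eq (show (0:ℝ) < 2*α - ginv α r by linarith [hmem.2])]
      exact hle
  -- Step 2 : expansion bounds
  have e1 : Dg (α+u) - Dg α = u * ∑' n : ℕ, 1/((α+u+n)*(α+n)) := by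
    have := Dg_sub hpu hα
    rw [show α+u-α = u by ring] at this
    exact this
  have e2 : Dg α - Dg (α-u) = u * ∑' n : ℕ, 1/((α+n)*(α-u+n)) := by
    have := Dg_sub hα hau
    rw [show α-(α-u) = u by ring] at this
    exact this
  have hS1 : Tg α - u * M ≤ ∑' n : ℕ, 1/((α+u+n)*(α+n)) := by
    have hsum1 : Summable (fun n : ℕ => 1/(α+n)^2 - u * (1/((α/2)+n)^3)) :=
      (summable_inv_sq hα).sub ((summable_cube hα2).mul_left u)
    have hts : ∑' n : ℕ, (1/(α+n)^2 - u * (1/((α/2)+n)^3)) = Tg α - u * M := by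
      rw [Summable.tsum_sub (summable_inv_sq hα) ((summable_cube hα2).mul_left u),
        tsum_mul_left]
      rfl
    rw [← hts]
    apply Summable.tsum_le_tsum _ hsum1 (summable_prod hpu hα)
    intro n
    have ha := pos_aux hα n
    have hb := pos_aux hpu n
    have hm := pos_aux hα2 n
    have key : 1/((α+u+(n:ℝ))*(α+n)) = 1/(α+n)^2 - u * (1/((α+n)^2*(α+u+n))) := by
      field_simp
      ring
    rw [key]
    have hbound : 1/((α+(n:ℝ))^2*(α+u+n)) ≤ 1/((α/2)+n)^3 := by
      apply one_div_le_one_div_of_le (by positivity)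
      have k1 : ((α/2)+(n:ℝ))*((α/2)+n) ≤ (α+n)*(α+n) := by nlinarith
      have k2 : ((α/2)+(n:ℝ))*((α/2)+n)*((α/2)+n) ≤ (α+n)*(α+n)*(α+u+n) :=
        mul_le_mul k1 (by linarith) (by positivity) (by positivity)
      nlinarith [k2]
    nlinarith [mul_le_mul_of_nonneg_left hbound hu0]
  have hS2 : ∑' n : ℕ, 1/((α+n)*(α-u+n)) ≤ Tg α + u * M := by
    have hsum1 : Summable (fun n : ℕ => 1/(α+n)^2 + u * (1/((α/2)+n)^3)) :=
      (summable_inv_sq hα).add ((summable_cube hα2).mul_left u)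
    have hts : ∑' n : ℕ, (1/(α+n)^2 + u * (1/((α/2)+n)^3)) = Tg α + u * M := by
      rw [Summable.tsum_add (summable_inv_sq hα) ((summable_cube hα2).mul_left u),
        tsum_mul_left]
      rfl
    rw [← hts]
    apply Summable.tsum_le_tsum _ (summable_prod hα hau) hsum1
    intro n
    have ha := pos_aux hα n
    have hb := pos_aux hau n
    have hm := pos_aux hα2 n
    have key : 1/((α+(n:ℝ))*(α-u+n)) = 1/(α+n)^2 + u * (1/((α+n)^2*(α-u+n))) := by
      field_simp
      ring
    rw [key]
    have hbound : 1/((α+(n:ℝ))^2*(α-u+n)) ≤ 1/((α/2)+n)^3 := by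
      apply one_div_le_one_div_of_le (by positivity)
      have k1 : ((α/2)+(n:ℝ))*((α/2)+n) ≤ (α+n)*(α+n) := by nlinarith
      have k2 : ((α/2)+(n:ℝ))*((α/2)+n)*((α/2)+n) ≤ (α+n)*(α+n)*(α-u+n) :=
        mul_le_mul k1 (by linarith) (by positivity) (by positivity)
      nlinarith [k2]
    nlinarith [mul_le_mul_of_nonneg_left hbound hu0]
  -- final chain
  rw [Psi0_eq hα]
  have hb1 : u * (Tg α - u*M) ≤ u * (∑' n : ℕ, 1/((α+u+n)*(α+n))) :=
    mul_le_mul_of_nonneg_left hS1 hu0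
  have hb2 : r * (u * (∑' n : ℕ, 1/((α+n)*(α-u+n)))) ≤ r * (u * (Tg α + u*M)) :=
    mul_le_mul_of_nonneg_left (mul_le_mul_of_nonneg_left hS2 hu0) hr0
  have hquad : ε * Tg α / 2 * (1-r)^2 ≤ u * (Tg α - u*M) - r * (u * (Tg α + u*M)) := by
    have h1r : 0 ≤ 1 - r := by linarith
    have key : ε * ε * ((1+r) * M) ≤ ε * (Tg α / 2) := by
      have k1 : ε * ((1+r)*M) ≤ ε * (2*M) := by
        apply mul_le_mul_of_nonneg_left _ hε0.le
        nlinarith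
      have k2 : ε * (ε * (2*M)) ≤ ε * (Tg α / 2) := by
        apply mul_le_mul_of_nonneg_left _ hε0.le
        nlinarith
      calc ε * ε * ((1+r)*M) = ε * (ε * ((1+r)*M)) := by ring
        _ ≤ ε * (ε * (2*M)) := by
            apply mul_le_mul_of_nonneg_left _ hε0.le
            nlinarith
        _ ≤ ε * (Tg α / 2) := k2
    have expand : u * (Tg α - u*M) - r * (u * (Tg α + u*M))
        = (1-r)^2 * (ε * Tg α) - (1-r)^2 * (ε * ε * ((1+r)*M)) := by
      rw [hu]; ring
    rw [expand]
    nlinarith [mul_le_mul_of_nonneg_left key (sq_nonneg (1-r))]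
  have e2r : r * (Dg α - Dg (α-u)) = r * (u * ∑' n : ℕ, 1/((α+n)*(α-u+n))) := by
    rw [e2]
  linarith [step1, e1, e2r, hb1, hb2, hquad]


lemma ftilde_le {α : ℝ} (hα : 0 < α) {c : ℝ}
    (hgap : ∀ r : ℝ, 0 ≤ r → r ≤ 1 → (1+r) * Psi0 α + c * (1-r)^2 ≤ fShape α r)
    {x y : ℝ} (hx : 0 ≤ x) (hy : 0 < y) (hxy : x ≤ y) :
    ftilde α x y ≤ -(x+y) * Psi0 α - c * (y-x)^2 / y := by
  have hr0 : 0 ≤ x/y := by positivity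
  have hr1 : x/y ≤ 1 := by rw [div_le_one hy]; exact hxy
  have h := hgap (x/y) hr0 hr1
  have h2 : -y * fShape α (x/y) ≤ -y * ((1+x/y) * Psi0 α + c * (1-x/y)^2) :=
    mul_le_mul_of_nonpos_left h (by linarith)
  have h3 : -y * ((1+x/y) * Psi0 α + c * (1-x/y)^2)
      = -(x+y) * Psi0 α - c * (y-x)^2 / y := by
    field_simp
    ring
  rw [ftilde]
  linarith


end SGaux

set_option maxHeartbeats 1000000 in
open Real in
/-- Leading-order gap of the shape function away from the boundary. -/
theorem shape_function_gap (α δ b : ℝ) (hα : 0 < α) (hδ : δ ∈ Set.Ioo 0 (1/3 : ℝ))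
    (hb : 1 ≤ b) :
    ∃ D : ℝ, 0 < D ∧ ∃ N₀ : ℕ, 1 ≤ N₀ ∧
      ∀ N : ℕ, N₀ ≤ N →
        ∀ xt st yt tt : ℤ,
          |(xt : ℝ) - st - (N : ℝ) ^ ((2 : ℝ)/3 + δ)| ≤ b * (N : ℝ) ^ ((2 : ℝ)/3) →
          |(yt : ℝ) - tt - (N : ℝ) ^ ((2 : ℝ)/3 + δ)| ≤ b * (N : ℝ) ^ ((2 : ℝ)/3) →
          (N : ℝ) / b ≤ (tt : ℝ) - st → (tt : ℝ) - st ≤ 4 * b * N →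
          ∀ i : ℤ, max xt st ≤ i → i ≤ min yt tt →
            4 * D * (N : ℝ) ^ ((1 : ℝ)/3 + 2 * δ)
                + (ftilde α ((i : ℝ) - xt) ((i : ℝ) - st)
                    + ftilde α ((tt : ℝ) - i) ((yt : ℝ) - i))
              ≤ -(((tt : ℝ) + yt - st - xt)) * Psi0 α := by
  obtain ⟨c, hc0, hgap⟩ := SGaux.fShape_gap hα
  obtain ⟨hδ0, hδ13⟩ := hδ
  have hb0 : (0:ℝ) < b := by linarith
  refine ⟨c/(24*b), by positivity, ⌈(2*b)^((1:ℝ)/δ)⌉₊ + 1, by omega, ?_⟩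
  intro N hN xt st yt tt hx hy hts1 hts2 i hi1 hi2
  have hN1 : 1 ≤ N := by omega
  have hNR : (1:ℝ) ≤ (N:ℝ) := by exact_mod_cast hN1
  have hNpos : (0:ℝ) < N := by linarith
  have hceil : (2*b)^((1:ℝ)/δ) ≤ (N:ℝ) := by
    calc (2*b)^((1:ℝ)/δ) ≤ (⌈(2*b)^((1:ℝ)/δ)⌉₊ : ℝ) := Nat.le_ceil _
      _ ≤ N := by exact_mod_cast Nat.le_of_succ_le hN
  have hNδ : 2*b ≤ (N:ℝ)^δ := by
    have h1 : ((2*b)^((1:ℝ)/δ))^δ ≤ (N:ℝ)^δ :=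
      Real.rpow_le_rpow (by positivity) hceil hδ0.le
    rwa [← Real.rpow_mul (show (0:ℝ) ≤ 2*b by positivity), one_div,
      inv_mul_cancel₀ hδ0.ne', Real.rpow_one] at h1
  set P := (N:ℝ)^((2:ℝ)/3 + δ) with hPdef
  have hN23 : (0:ℝ) < (N:ℝ)^((2:ℝ)/3) := Real.rpow_pos_of_pos hNpos _
  have hPpos : 0 < P := Real.rpow_pos_of_pos hNpos _
  have hPsplit : P = (N:ℝ)^((2:ℝ)/3) * (N:ℝ)^δ := Real.rpow_add hNpos _ _
  have hQP : b * (N:ℝ)^((2:ℝ)/3) ≤ P/2 := by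
    rw [hPsplit]
    have := mul_le_mul_of_nonneg_left hNδ hN23.le
    linarith
  have hPN : P ≤ (N:ℝ) := by
    have := Real.rpow_le_rpow_of_exponent_le hNR (show (2:ℝ)/3+δ ≤ 1 by linarith)
    rwa [Real.rpow_one] at this
  have hP2 : P^2 = (N:ℝ)^((1:ℝ)/3+2*δ) * N := by
    have h1 : P * P = (N:ℝ)^(((2:ℝ)/3+δ) + ((2:ℝ)/3+δ)) := (Real.rpow_add hNpos _ _).symm
    have h2 : (N:ℝ)^((1:ℝ)/3+2*δ) * (N:ℝ)^(1:ℝ) = (N:ℝ)^(((1:ℝ)/3+2*δ) + 1) :=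
      (Real.rpow_add hNpos _ _).symm
    rw [sq, h1, show ((2:ℝ)/3+δ) + ((2:ℝ)/3+δ) = ((1:ℝ)/3+2*δ) + 1 by ring, ← h2,
      Real.rpow_one]
  -- bounds on the two increments
  obtain ⟨hx1', hx2'⟩ := abs_le.1 hx
  obtain ⟨hy1', hy2'⟩ := abs_le.1 hy
  have hD1l : P/2 ≤ (xt:ℝ) - st := by linarith
  have hD1u : (xt:ℝ) - st ≤ 3/2*P := by linarith
  have hD2l : P/2 ≤ (yt:ℝ) - tt := by linarith
  have hD2u : (yt:ℝ) - tt ≤ 3/2*P := by linarith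
  -- coordinates
  have hxti : (xt:ℝ) ≤ (i:ℝ) := by exact_mod_cast le_trans (le_max_left _ _) hi1
  have hsti : (st:ℝ) ≤ (i:ℝ) := by exact_mod_cast le_trans (le_max_right _ _) hi1
  have hiyt : (i:ℝ) ≤ (yt:ℝ) := by exact_mod_cast le_trans hi2 (min_le_left _ _)
  have hitt : (i:ℝ) ≤ (tt:ℝ) := by exact_mod_cast le_trans hi2 (min_le_right _ _)
  set x1 := (i:ℝ) - xt with hx1def
  set y1 := (i:ℝ) - st with hy1def
  set x2 := (tt:ℝ) - i with hx2def
  set y2 := (yt:ℝ) - i with hy2def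
  have hx10 : 0 ≤ x1 := by rw [hx1def]; linarith
  have hy10 : 0 < y1 := by rw [hy1def]; linarith
  have hx1y1 : x1 ≤ y1 := by rw [hx1def, hy1def]; linarith
  have hx20 : 0 ≤ x2 := by rw [hx2def]; linarith
  have hy20 : 0 < y2 := by rw [hy2def]; linarith
  have hx2y2 : x2 ≤ y2 := by rw [hx2def, hy2def]; linarith
  have f1 := SGaux.ftilde_le hα hgap hx10 hy10 hx1y1
  have f2 := SGaux.ftilde_le hα hgap hx20 hy20 hx2y2
  have hd1 : y1 - x1 = (xt:ℝ) - st := by rw [hx1def, hy1def]; ring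
  have hd2 : y2 - x2 = (yt:ℝ) - tt := by rw [hx2def, hy2def]; ring
  have hsum12 : y1 + y2 ≤ 6*b*N := by
    have h : y1 + y2 = ((tt:ℝ) - st) + ((yt:ℝ) - tt) := by rw [hy1def, hy2def]; ring
    rw [h]
    have hbN : (N:ℝ) ≤ b*N := by
      have := mul_le_mul_of_nonneg_right hb hNpos.le
      linarith
    linarith
  have hsumpos : 0 < y1 + y2 := by linarith
  have h1 : (P/2)^2 ≤ (y1-x1)^2 := by
    rw [hd1]
    exact pow_le_pow_left₀ (by positivity) hD1l 2
  have h2 : (P/2)^2 ≤ (y2-x2)^2 := by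
    rw [hd2]
    exact pow_le_pow_left₀ (by positivity) hD2l 2
  have hga : (P/2)^2/y1 ≤ (y1-x1)^2/y1 := by gcongr
  have hgb : (P/2)^2/y2 ≤ (y2-x2)^2/y2 := by gcongr
  have hamhm : 4/(y1+y2) ≤ 1/y1 + 1/y2 := by
    rw [div_add_div _ _ hy10.ne' hy20.ne', div_le_div_iff₀ hsumpos (by positivity)]
    linarith [sq_nonneg (y1-y2)]
  have hstep : P^2/(y1+y2) ≤ (y1-x1)^2/y1 + (y2-x2)^2/y2 := by
    have ha : (P/2)^2 * (4/(y1+y2)) ≤ (P/2)^2 * (1/y1 + 1/y2) :=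
      mul_le_mul_of_nonneg_left hamhm (by positivity)
    have hb' : (P/2)^2 * (4/(y1+y2)) = P^2/(y1+y2) := by
      field_simp
      ring
    have hc' : (P/2)^2 * (1/y1 + 1/y2) = (P/2)^2/y1 + (P/2)^2/y2 := by ring
    rw [hb'] at ha
    rw [hc'] at ha
    linarith
  have hstep2 : P^2/(6*b*N) ≤ P^2/(y1+y2) := by gcongr <;> positivity
  have hstep3 : P^2/(6*b*N) = (N:ℝ)^((1:ℝ)/3+2*δ)/(6*b) := by
    rw [hP2]
    field_simp
  have hfinal : c/(6*b) * (N:ℝ)^((1:ℝ)/3+2*δ)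
      ≤ c * ((y1-x1)^2/y1) + c * ((y2-x2)^2/y2) := by
    have hch : (N:ℝ)^((1:ℝ)/3+2*δ)/(6*b) ≤ (y1-x1)^2/y1 + (y2-x2)^2/y2 := by
      rw [← hstep3]
      linarith
    have := mul_le_mul_of_nonneg_left hch hc0.le
    calc c/(6*b) * (N:ℝ)^((1:ℝ)/3+2*δ) = c * ((N:ℝ)^((1:ℝ)/3+2*δ)/(6*b)) := by ring
      _ ≤ c * ((y1-x1)^2/y1 + (y2-x2)^2/y2) := this
      _ = c * ((y1-x1)^2/y1) + c * ((y2-x2)^2/y2) := by ring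
  have h46 : 4*(c/(24*b)) * (N:ℝ)^((1:ℝ)/3+2*δ) = c/(6*b) * (N:ℝ)^((1:ℝ)/3+2*δ) := by
    have : 4*(c/(24*b)) = c/(6*b) := by
      field_simp
      ring
    rw [this]
  have hcoord : -(x1+y1) * Psi0 α - (x2+y2) * Psi0 α
      = -(((tt:ℝ)+yt-st-xt)) * Psi0 α := by
    rw [hx1def, hy1def, hx2def, hy2def]
    ring
  have key1 : ftilde α x1 y1 + ftilde α x2 y2
      ≤ -(((tt:ℝ)+yt-st-xt)) * Psi0 α
        - (c * ((y1-x1)^2/y1) + c * ((y2-x2)^2/y2)) := by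
    have e1 : c * (y1-x1)^2/y1 = c * ((y1-x1)^2/y1) := by ring
    have e2 : c * (y2-x2)^2/y2 = c * ((y2-x2)^2/y2) := by ring
    linarith only [f1, f2, hcoord, e1, e2]
  linarith only [key1, hfinal, h46]
end

section
/- Fix α > 0. For every ζ ∈ (−α, α), one has F(α) ≥ F(α+ζ); moreover F(α) = −Ψ0(α). -/
open MeasureTheory ProbabilityTheory Real

namespace FPeakAux

open Real Filter Topology Set


noncomputable def Sfun (x : ℝ) : ℝ := ∑' n : ℕ, 1 / (x + n) ^ 2

noncomputable def phi (x : ℝ) : ℝ := ∑' n : ℕ, (1 / ((n : ℝ) + 1) - 1 / (x + n))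

lemma one_div_sq (a : ℝ) : 1 / a * (1 / a) = 1 / a ^ 2 := by
  rw [div_mul_div_comm, one_mul, sq]

lemma summable_base : Summable (fun n : ℕ => 1 / ((n : ℝ) + 1) ^ 2) := by
  have h := Real.summable_one_div_nat_pow.mpr (by norm_num : 1 < 2)
  have := (summable_nat_add_iff (f := fun n : ℕ => 1 / (n : ℝ) ^ 2) 1).mpr h
  simpa [Nat.cast_add] using this

lemma inv_bound {x : ℝ} (hx : 0 < x) (n : ℕ) :
    1 / (x + n) ≤ (1 + 1 / x) * (1 / ((n : ℝ) + 1)) := by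
  have hxn : (0:ℝ) < x + n := by positivity
  have hn1 : (0:ℝ) < (n : ℝ) + 1 := by positivity
  rw [div_le_iff₀ hxn, mul_comm]
  have hkey : (1 + 1 / x) * (x + n) = x + n + 1 + n * (1 / x) := by
    field_simp; ring
  have hnx : 0 ≤ (n : ℝ) * (1 / x) := by positivity
  have hle : (n : ℝ) + 1 ≤ (1 + 1 / x) * (x + n) := by rw [hkey]; linarith
  calc (1:ℝ) = ((n:ℝ)+1) * (1/((n:ℝ)+1)) := by field_simp
    _ ≤ ((1 + 1/x) * (x+n)) * (1/((n:ℝ)+1)) := by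
        apply mul_le_mul_of_nonneg_right hle (by positivity)
    _ = (x + n) * ((1 + 1/x) * (1/((n:ℝ)+1))) := by ring

lemma sq_inv_bound {x : ℝ} (hx : 0 < x) (n : ℕ) :
    1 / (x + n) ^ 2 ≤ (1 + 1/x)^2 * (1 / ((n:ℝ)+1)^2) := by
  have h := inv_bound hx n
  have h0 : (0:ℝ) ≤ 1 / (x + n) := by positivity
  have hm := mul_le_mul h h h0 (by positivity)
  calc 1 / (x + n) ^ 2 = (1/(x+n)) * (1/(x+n)) := (one_div_sq _).symm
    _ ≤ ((1 + 1/x) * (1/((n:ℝ)+1))) * ((1 + 1/x) * (1/((n:ℝ)+1))) := hm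
    _ = (1 + 1/x)^2 * (1/((n:ℝ)+1) * (1/((n:ℝ)+1))) := by ring
    _ = (1 + 1/x)^2 * (1 / ((n:ℝ)+1)^2) := by rw [one_div_sq]

lemma summable_Sfun {x : ℝ} (hx : 0 < x) : Summable (fun n : ℕ => 1 / (x + n) ^ 2) := by
  have hb : Summable (fun n : ℕ => (1 + 1/x)^2 * (1 / ((n:ℝ)+1)^2)) := summable_base.mul_left _
  exact Summable.of_nonneg_of_le (fun n => by positivity) (fun n => sq_inv_bound hx n) hb

lemma summable_phi {x : ℝ} (hx : 0 < x) :
    Summable (fun n : ℕ => 1 / ((n : ℝ) + 1) - 1 / (x + n)) := by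
  have hb : Summable (fun n : ℕ => (|x - 1| * (1 + 1/x)) * (1 / ((n:ℝ)+1)^2)) :=
    summable_base.mul_left _
  apply Summable.of_norm_bounded hb
  intro n
  have hxn : (0:ℝ) < x + n := by positivity
  have hn1 : (0:ℝ) < (n : ℝ) + 1 := by positivity
  have hEq : 1 / ((n : ℝ) + 1) - 1 / (x + n) = (x - 1) * (1/((n:ℝ)+1) * (1/(x+n))) := by
    field_simp; ring
  rw [hEq, norm_mul, norm_mul]
  simp only [Real.norm_eq_abs]
  rw [abs_of_pos (by positivity : (0:ℝ) < 1/((n:ℝ)+1)), abs_of_pos (by positivity : (0:ℝ) < 1/(x+n))]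
  have h := inv_bound hx n
  calc |x - 1| * (1/((n:ℝ)+1) * (1/(x+n)))
      ≤ |x - 1| * (1/((n:ℝ)+1) * ((1 + 1/x) * (1/((n:ℝ)+1)))) := by
        apply mul_le_mul_of_nonneg_left _ (abs_nonneg _)
        exact mul_le_mul_of_nonneg_left h (by positivity)
    _ = |x - 1| * (1 + 1/x) * (1/((n:ℝ)+1) * (1/((n:ℝ)+1))) := by ring
    _ = |x - 1| * (1 + 1/x) * (1 / ((n:ℝ)+1)^2) := by rw [one_div_sq]

lemma hasDerivAt_phi {x : ℝ} (hx : 0 < x) : HasDerivAt phi (Sfun x) x := by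
  have hx2 : (0:ℝ) < x/2 := by linarith
  have hmem : x ∈ Ioi (x/2) := by simp [Set.mem_Ioi]; linarith
  have H := hasDerivAt_tsum_of_isPreconnected
    (u := fun n : ℕ => 1 / (x/2 + n) ^ 2)
    (g := fun (n : ℕ) (y : ℝ) => 1 / ((n : ℝ) + 1) - 1 / (y + n))
    (g' := fun (n : ℕ) (y : ℝ) => 1 / (y + n) ^ 2)
    (summable_Sfun hx2) (isOpen_Ioi) (isPreconnected_Ioi)
    (fun n y hy => ?_) (fun n y hy => ?_) hmem (summable_phi hx) hmem
  · exact H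
  · -- HasDerivAt (fun y => 1/(n+1) - 1/(y+n)) (1/(y+n)^2) y
    have hyn : y + (n:ℝ) ≠ 0 := by
      have : (0:ℝ) < y := lt_trans hx2 hy
      positivity
    have h1 : HasDerivAt (fun y : ℝ => y + (n:ℝ)) 1 y := (hasDerivAt_id y).add_const _
    have h2 := h1.inv hyn
    have h3 := h2.const_sub (1 / ((n:ℝ) + 1))
    have h4 : HasDerivAt (fun z : ℝ => 1/((n:ℝ)+1) - 1/(z+n)) (1/(y+n)^2) y := by
      simpa [one_div, neg_div] using h3
    exact h4
  · -- bound
    have hy' : x/2 < y := hy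
    have h1 : (0:ℝ) < x/2 + n := by positivity
    have h2 : (0:ℝ) < y + n := by linarith
    have : (x/2 + (n:ℝ))^2 ≤ (y + n)^2 := by nlinarith
    have hb : 1 / (y + (n:ℝ))^2 ≤ 1 / (x/2 + n)^2 := by
      apply one_div_le_one_div_of_le (by positivity) this
    rw [Real.norm_eq_abs, abs_of_pos (by positivity)]
    exact hb

lemma phi_mono {x y : ℝ} (hx : 0 < x) (hxy : x ≤ y) : phi x ≤ phi y := by
  apply Summable.tsum_le_tsum _ (summable_phi hx) (summable_phi (lt_of_lt_of_le hx hxy))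
  intro n
  have h1 : (0:ℝ) < x + n := by positivity
  gcongr

lemma telescope_hasSum {x : ℝ} (hx : 0 < x) :
    HasSum (fun n : ℕ => 1 / (x + n) - 1 / (x + n + 1)) (1 / x) := by
  have hnn : ∀ n : ℕ, 0 ≤ 1 / (x + n) - 1 / (x + n + 1) := by
    intro n
    have h1 : (0:ℝ) < x + n := by positivity
    have h2 : (0:ℝ) < x + n + 1 := by linarith
    have := one_div_le_one_div_of_le h1 (by linarith : x + (n:ℝ) ≤ x + n + 1)
    linarith
  rw [hasSum_iff_tendsto_nat_of_nonneg hnn]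
  have hps : ∀ n : ℕ, ∑ i ∈ Finset.range n, (1 / (x + i) - 1 / (x + i + 1)) = 1 / x - 1 / (x + n) := by
    intro n
    have h := Finset.sum_range_sub' (f := fun i : ℕ => 1 / (x + i)) n
    simp only [Nat.cast_add, Nat.cast_one, Nat.cast_zero, add_zero] at h
    rw [← h]
    apply Finset.sum_congr rfl
    intro i _
    ring_nf
  simp_rw [hps]
  have h0 : Tendsto (fun n : ℕ => 1 / (x + n)) atTop (𝓝 0) := by
    have h1 : Tendsto (fun n : ℕ => x + (n:ℝ)) atTop atTop :=
      tendsto_atTop_add_const_left _ _ tendsto_natCast_atTop_atTop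
    simpa [one_div, Pi.inv_def] using h1.inv_tendsto_atTop
  simpa using tendsto_const_nhds.sub h0

lemma phi_rec {x : ℝ} (hx : 0 < x) : phi (x + 1) = phi x + 1 / x := by
  have hx1 : (0:ℝ) < x + 1 := by linarith
  have hsub : phi (x+1) - phi x
      = ∑' n : ℕ, ((1/((n:ℝ)+1) - 1/(x+1+n)) - (1/((n:ℝ)+1) - 1/(x+n))) :=
    (Summable.tsum_sub (summable_phi hx1) (summable_phi hx)).symm
  have hcongr : ∑' n : ℕ, ((1/((n:ℝ)+1) - 1/(x+1+n)) - (1/((n:ℝ)+1) - 1/(x+n)))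
      = ∑' n : ℕ, (1/(x+(n:ℝ)) - 1/(x+n+1)) := by
    apply tsum_congr
    intro n
    rw [show x + 1 + (n:ℝ) = x + (n:ℝ) + 1 by ring]
    ring
  have := (telescope_hasSum hx).tsum_eq
  have : phi (x+1) - phi x = 1/x := by rw [hsub, hcongr, this]
  linarith

lemma psi0_eq_deriv : Psi0 = deriv (Real.log ∘ Real.Gamma) := rfl

lemma gamma_log_diff {x : ℝ} (hx : 0 < x) :
    DifferentiableAt ℝ (Real.log ∘ Real.Gamma) x := by
  refine ((Real.differentiableAt_Gamma ?_).log (Real.Gamma_pos_of_pos hx).ne')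
  intro m
  have h1 : -(m:ℝ) ≤ 0 := by simp [neg_nonpos]
  intro h
  rw [h] at hx
  linarith

lemma psi0_rec {x : ℝ} (hx : 0 < x) : Psi0 (x + 1) = Psi0 x + 1 / x := by
  have h_rec : ∀ y : ℝ, 0 < y → Real.log (Real.Gamma (y+1)) = Real.log (Real.Gamma y) + Real.log y := by
    intro y hy
    rw [Real.Gamma_add_one hy.ne', Real.log_mul hy.ne' (Real.Gamma_pos_of_pos hy).ne']
    ring
  rw [psi0_eq_deriv, ← deriv_comp_add_const, one_div, ← Real.deriv_log,
    ← deriv_add (gamma_log_diff hx) (Real.differentiableAt_log hx.ne')]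
  apply Filter.EventuallyEq.deriv_eq
  filter_upwards [eventually_gt_nhds hx] with y hy
  exact h_rec y hy

lemma psi0_mono : MonotoneOn Psi0 (Ioi 0) := by
  rw [psi0_eq_deriv]
  exact Real.convexOn_log_Gamma.monotoneOn_deriv (fun x hx => gamma_log_diff hx)

lemma d_step {x : ℝ} (hx : 0 < x) :
    Psi0 (x+1) - phi (x+1) = Psi0 x - phi x := by
  rw [psi0_rec hx, phi_rec hx]; ring

lemma d_shift {x : ℝ} (hx : 0 < x) (n : ℕ) :
    Psi0 (x + n) - phi (x + n) = Psi0 x - phi x := by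
  induction n with
  | zero => simp
  | succ n ih =>
    have hxn : (0:ℝ) < x + n := by positivity
    have h := d_step hxn
    push_cast
    rw [show x + ((n:ℝ) + 1) = (x + n) + 1 by ring]
    rw [h, ih]

lemma d_const {x : ℝ} (hx : 0 < x) : Psi0 x - phi x = Psi0 1 - phi 1 := by
  have key : ∀ n : ℕ, 1 ≤ n →
      |Psi0 x - phi x - (Psi0 1 - phi 1)| ≤ 1 / ((⌊x⌋₊ : ℝ) + n) := by
    intro n hn
    set k : ℕ := ⌊x⌋₊ + n with hk
    have hkpos : (0:ℝ) < k := by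
      have : 1 ≤ k := le_trans hn (Nat.le_add_left _ _)
      exact_mod_cast Nat.lt_of_lt_of_le Nat.zero_lt_one this
    have hfl : (k:ℝ) ≤ x + n := by
      have := Nat.floor_le hx.le
      push_cast [hk]; linarith
    have hfu : x + n ≤ (k:ℝ) + 1 := by
      have := Nat.lt_floor_add_one x
      push_cast [hk]; linarith
    have hxn : (0:ℝ) < x + n := by positivity
    have hP1 : Psi0 k ≤ Psi0 (x + n) := psi0_mono hkpos hxn hfl
    have hP2 : Psi0 (x + n) ≤ Psi0 ((k:ℝ) + 1) := psi0_mono hxn (by linarith : (0:ℝ) < (k:ℝ)+1) hfu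
    have hP3 : Psi0 ((k:ℝ) + 1) = Psi0 k + 1 / k := psi0_rec hkpos
    have hQ1 : phi k ≤ phi (x + n) := phi_mono hkpos hfl
    have hQ2 : phi (x + n) ≤ phi ((k:ℝ) + 1) := phi_mono hxn hfu
    have hQ3 : phi ((k:ℝ) + 1) = phi k + 1 / k := phi_rec hkpos
    have hdx : Psi0 (x + n) - phi (x + n) = Psi0 x - phi x := d_shift hx n
    have hdk : Psi0 (k:ℝ) - phi (k:ℝ) = Psi0 1 - phi 1 := by
      obtain ⟨m, hm⟩ : ∃ m : ℕ, k = m + 1 := ⟨k - 1, by omega⟩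
      have hds := d_shift (x := 1) one_pos m
      rw [hm, show ((m+1 : ℕ):ℝ) = 1 + (m:ℝ) by push_cast; ring]
      simpa using hds
    have hcast : ((⌊x⌋₊:ℝ) + n) = (k:ℝ) := by push_cast [hk]; ring
    rw [← hdx, ← hdk, hcast, abs_le]
    constructor <;> linarith
  by_contra hne
  have hc : 0 < |Psi0 x - phi x - (Psi0 1 - phi 1)| := abs_pos.mpr (sub_ne_zero.mpr hne)
  set c := |Psi0 x - phi x - (Psi0 1 - phi 1)| with hcdef
  obtain ⟨n, hn⟩ := exists_nat_gt (1 / c)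
  have h1n : 1 ≤ n + 1 := Nat.le_add_left 1 n
  have hb := key (n + 1) h1n
  have hd : (1:ℝ)/c < (⌊x⌋₊ : ℝ) + (n+1 : ℕ) := by
    push_cast
    have : (0:ℝ) ≤ ⌊x⌋₊ := by positivity
    linarith
  have : 1 / ((⌊x⌋₊ : ℝ) + (n+1 : ℕ)) < c := by
    rw [div_lt_iff₀ (by positivity)]
    rw [div_lt_iff₀ hc] at hd
    linarith
  linarith

lemma psi0_hasDeriv {x : ℝ} (hx : 0 < x) : HasDerivAt Psi0 (Sfun x) x := by
  have heq : Psi0 =ᶠ[𝓝 x] (fun y => phi y + (Psi0 1 - phi 1)) := by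
    filter_upwards [eventually_gt_nhds hx] with y hy
    have := d_const hy
    linarith
  exact ((hasDerivAt_phi hx).add_const _).congr_of_eventuallyEq heq

lemma psi1_eq {x : ℝ} (hx : 0 < x) : Psi1 x = Sfun x := by
  rw [show Psi1 x = deriv Psi0 x from rfl]
  exact (psi0_hasDeriv hx).deriv

lemma Sfun_pos {x : ℝ} (hx : 0 < x) : 0 < Sfun x := by
  have h0 : 1 / (x + (0:ℕ)) ^ 2 ≤ Sfun x :=
    Summable.le_tsum (summable_Sfun hx) 0 (fun j _ => by positivity)
  have : (0:ℝ) < 1 / (x + (0:ℕ)) ^ 2 := by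
    simp only [Nat.cast_zero, add_zero]
    positivity
  linarith

lemma Sfun_anti {x y : ℝ} (hx : 0 < x) (hxy : x ≤ y) : Sfun y ≤ Sfun x := by
  apply Summable.tsum_le_tsum _ (summable_Sfun (lt_of_lt_of_le hx hxy)) (summable_Sfun hx)
  intro n
  have h1 : (0:ℝ) < x + n := by positivity
  gcongr

lemma psi0_continuousOn {a b : ℝ} (ha : 0 < a) : ContinuousOn Psi0 (Icc a b) := by
  intro y hy
  have hy0 : 0 < y := lt_of_lt_of_le ha hy.1
  exact ((psi0_hasDeriv hy0).differentiableAt.continuousAt).continuousWithinAt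

lemma psi0_lb {a b : ℝ} (ha : 0 < a) (hab : a ≤ b) :
    Sfun b * (b - a) ≤ Psi0 b - Psi0 a := by
  refine (convex_Icc a b).mul_sub_le_image_sub_of_le_deriv (psi0_continuousOn ha) ?_ ?_
    a (left_mem_Icc.mpr hab) b (right_mem_Icc.mpr hab) hab
  · intro z hz
    rw [interior_Icc] at hz
    exact ((psi0_hasDeriv (lt_trans ha hz.1)).differentiableAt).differentiableWithinAt
  · intro z hz
    rw [interior_Icc] at hz
    have hz0 : 0 < z := lt_trans ha hz.1
    rw [(psi0_hasDeriv hz0).deriv]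
    exact Sfun_anti hz0 hz.2.le

lemma psi0_ub {a b : ℝ} (ha : 0 < a) (hab : a ≤ b) :
    Psi0 b - Psi0 a ≤ Sfun a * (b - a) := by
  refine (convex_Icc a b).image_sub_le_mul_sub_of_deriv_le (psi0_continuousOn ha) ?_ ?_
    a (left_mem_Icc.mpr hab) b (right_mem_Icc.mpr hab) hab
  · intro z hz
    rw [interior_Icc] at hz
    exact ((psi0_hasDeriv (lt_trans ha hz.1)).differentiableAt).differentiableWithinAt
  · intro z hz
    rw [interior_Icc] at hz
    have hz0 : 0 < z := lt_trans ha hz.1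
    rw [(psi0_hasDeriv hz0).deriv]
    exact Sfun_anti ha hz.1.le

theorem main (α : ℝ) (hα : 0 < α) :
    (∀ ζ ∈ Set.Ioo (-α) α, Fshape α (α + ζ) ≤ Fshape α α) ∧
    Fshape α α = -Psi0 α := by
  have hAα : Psi1 α = Sfun α := psi1_eq hα
  have hSα : 0 < Sfun α := Sfun_pos hα
  have h2 : Fshape α α = -Psi0 α := by
    unfold Fshape
    rw [show 2*α - α = α by ring, hAα]
    field_simp
  refine ⟨?_, h2⟩
  intro ζ hζ
  obtain ⟨hζ1, hζ2⟩ := hζ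
  have hx : 0 < α + ζ := by linarith
  have hy : 0 < α - ζ := by linarith
  have hA := psi1_eq hx
  have hB := psi1_eq hy
  have hSA := Sfun_pos hx
  have hSB := Sfun_pos hy
  rw [h2]
  unfold Fshape
  rw [show 2*α - (α + ζ) = α - ζ by ring, hA, hB]
  rw [div_le_iff₀ (by positivity : 0 < Sfun (α + ζ) + Sfun (α - ζ))]
  rcases le_or_gt 0 ζ with h | h
  · have hlb := psi0_lb hα (by linarith : α ≤ α + ζ)
    have hub := psi0_ub hy (by linarith : α - ζ ≤ α)
    rw [show α + ζ - α = ζ by ring] at hlb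
    rw [show α - (α - ζ) = ζ by ring] at hub
    nlinarith [mul_le_mul_of_nonneg_left hlb hSB.le, mul_le_mul_of_nonneg_left hub hSA.le]
  · have hlb := psi0_lb hα (by linarith : α ≤ α - ζ)
    have hub := psi0_ub hx (by linarith : α + ζ ≤ α)
    rw [show α - ζ - α = -ζ by ring] at hlb
    rw [show α - (α + ζ) = -ζ by ring] at hub
    nlinarith [mul_le_mul_of_nonneg_left hlb hSA.le, mul_le_mul_of_nonneg_left hub hSB.le]

end FPeakAux

open Real in
/-- `F` attains its maximum at `α`, with maximal value `-Ψ₀(α)`. -/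
theorem F_peak_at_alpha (α : ℝ) (hα : 0 < α) :
    (∀ ζ ∈ Set.Ioo (-α) α, Fshape α (α + ζ) ≤ Fshape α α) ∧
    Fshape α α = -Psi0 α := FPeakAux.main α hα
end

section
/- Fix α > 0, κ > 0 and δ ∈ (0,1/3). There exist constants N₀, C₀ > 0 depending on α, κ, δ such that for all integers N ≥ N₀ and T ≥ 1 with T/N ∈ (0, 1 − κN^{−1/3+δ}], and every integer k ∈ {1, …, T}, one has −N·f(T/N) ≥ −N·f((T−k)/N) − k·Ψ0(α) + C₀·k·N^{−1/3+δ}. -/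
open MeasureTheory ProbabilityTheory Real

section ShapeAux
open Real Set Filter Topology

lemma hasDerivAt_logGamma {x : ℝ} (hx : 0 < x) :
    HasDerivAt (fun y => Real.log (Real.Gamma y)) (Psi0 x) x := by
  have h : DifferentiableAt ℝ (fun y => Real.log (Real.Gamma y)) x :=
    (Real.differentiableAt_Gamma (fun m => ((neg_nonpos.mpr (Nat.cast_nonneg m)).trans_lt hx).ne')).log (Real.Gamma_pos_of_pos hx).ne'
  simpa [Psi0] using h.hasDerivAt

lemma Psi0_add_one {x : ℝ} (hx : 0 < x) : Psi0 (x + 1) = Psi0 x + x⁻¹ := by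
  have h1 : HasDerivAt (fun y : ℝ => Real.log (Real.Gamma (y + 1))) (Psi0 (x + 1)) x := by
    simpa [Function.comp_def] using (hasDerivAt_logGamma (by linarith : (0:ℝ) < x + 1)).comp x
      ((hasDerivAt_id x).add_const 1)
  have h2 : HasDerivAt (fun y : ℝ => Real.log y + Real.log (Real.Gamma y)) (x⁻¹ + Psi0 x) x :=
    (Real.hasDerivAt_log hx.ne').add (hasDerivAt_logGamma hx)
  have heq : (fun y : ℝ => Real.log (Real.Gamma (y + 1))) =ᶠ[nhds x]
      (fun y : ℝ => Real.log y + Real.log (Real.Gamma y)) := by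
    filter_upwards [eventually_gt_nhds hx] with y hy
    rw [Real.Gamma_add_one hy.ne', Real.log_mul hy.ne' (Real.Gamma_pos_of_pos hy).ne']
  have := h1.congr_of_eventuallyEq heq.symm
  have := this.unique h2
  linarith [this]

lemma Psi0_monotoneOn : MonotoneOn Psi0 (Set.Ioi (0:ℝ)) := by
  have h := Real.convexOn_log_Gamma.monotoneOn_deriv (fun x hx =>
    ((Real.differentiableAt_Gamma (fun m => ((neg_nonpos.mpr (Nat.cast_nonneg m)).trans_lt hx).ne')).log (Real.Gamma_pos_of_pos hx).ne'))
  exact h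

open Filter Topology

-- summability helpers
lemma min_mul_le_add {a : ℝ} (ha : 0 < a) (k : ℕ) : min a 1 * ((k:ℝ) + 1) ≤ a + k := by
  rcases min_cases a 1 with ⟨h1, h2⟩ | ⟨h1, h2⟩ <;> rw [h1] <;> nlinarith [Nat.cast_nonneg (α := ℝ) k]

lemma inv_add_le {a : ℝ} (ha : 0 < a) (k : ℕ) :
    (a + k)⁻¹ ≤ (min a 1)⁻¹ * ((k:ℝ) + 1)⁻¹ := by
  rw [← mul_inv]
  exact inv_anti₀ (by positivity) (min_mul_le_add ha k)

lemma summable_shift_sq : Summable (fun k : ℕ => (((k:ℝ) + 1) ^ 2)⁻¹) := by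
  have h : Summable (fun n : ℕ => 1 / (n:ℝ) ^ 2) := summable_one_div_nat_pow.mpr one_lt_two
  have := (summable_nat_add_iff (f := fun n : ℕ => 1 / (n:ℝ) ^ 2) 1).mpr h
  simpa [one_div] using this

lemma summable_inv_mul {a b : ℝ} (ha : 0 < a) (hb : 0 < b) :
    Summable (fun k : ℕ => (a + k)⁻¹ * (b + k)⁻¹) := by
  apply Summable.of_nonneg_of_le (fun k => by positivity)
    (fun k => ?_) ((summable_shift_sq.mul_left ((min a 1)⁻¹ * (min b 1)⁻¹)))
  have h1 := inv_add_le ha k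
  have h2 := inv_add_le hb k
  have : (a + k)⁻¹ * (b + k)⁻¹ ≤ ((min a 1)⁻¹ * ((k:ℝ) + 1)⁻¹) * ((min b 1)⁻¹ * ((k:ℝ) + 1)⁻¹) := by
    apply mul_le_mul h1 h2 (by positivity) (by positivity)
  refine this.trans (le_of_eq ?_)
  rw [sq, mul_inv]; ring

lemma summable_inv_sq {a : ℝ} (ha : 0 < a) : Summable (fun k : ℕ => ((a + k) ^ 2)⁻¹) := by
  have := summable_inv_mul ha ha
  simpa [sq, mul_inv] using this

lemma Psi0_add_nat {x : ℝ} (hx : 0 < x) (m : ℕ) :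
    Psi0 (x + m) = Psi0 x + ∑ j ∈ Finset.range m, (x + j)⁻¹ := by
  induction m with
  | zero => simp
  | succ m ih =>
    have hx' : 0 < x + m := by positivity
    have e : x + ((m:ℝ) + 1) = (x + m) + 1 := by ring
    rw [Nat.cast_succ, e, Psi0_add_one hx', ih, Finset.sum_range_succ]
    ring

lemma Psi0_diff_partial {a b : ℝ} (ha : 0 < a) (hb : 0 < b) (n : ℕ) :
    Psi0 (b + n) - Psi0 (a + n) =
      Psi0 b - Psi0 a - ∑ k ∈ Finset.range n, ((a + k)⁻¹ - (b + k)⁻¹) := by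
  induction n with
  | zero => simp
  | succ n ih =>
    have ha' : 0 < a + n := by positivity
    have hb' : 0 < b + n := by positivity
    have e1 : b + ((n:ℝ) + 1) = (b + n) + 1 := by ring
    have e2 : a + ((n:ℝ) + 1) = (a + n) + 1 := by ring
    rw [Nat.cast_succ, e1, e2, Psi0_add_one hb', Psi0_add_one ha', Finset.sum_range_succ]
    linarith [ih]

lemma tendsto_inv_add_atTop (a : ℝ) : Tendsto (fun n : ℕ => (a + n)⁻¹) atTop (𝓝 0) := by
  apply Tendsto.inv_tendsto_atTop
  exact tendsto_atTop_add_const_left atTop a (tendsto_natCast_atTop_atTop)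

lemma tendsto_Psi0_shift_sub {a b : ℝ} (ha : 0 < a) (hab : a ≤ b) :
    Tendsto (fun n : ℕ => Psi0 (b + n) - Psi0 (a + n)) atTop (𝓝 0) := by
  obtain ⟨m, hm⟩ := exists_nat_ge (b - a)
  refine squeeze_zero (g := fun n : ℕ => m * (a + n)⁻¹) (fun n => ?_) (fun n => ?_) ?_
  · have hn : (0:ℝ) ≤ n := Nat.cast_nonneg n
    have h := Psi0_monotoneOn (Set.mem_Ioi.mpr (by linarith : (0:ℝ) < a + n))
      (Set.mem_Ioi.mpr (by linarith : (0:ℝ) < b + n)) (by linarith)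
    linarith
  · have hn : (0:ℝ) ≤ n := Nat.cast_nonneg n
    have han : (0:ℝ) < a + n := by linarith
    have h1 : Psi0 (b + n) ≤ Psi0 ((a + n) + m) := by
      apply Psi0_monotoneOn (Set.mem_Ioi.mpr (by linarith : (0:ℝ) < b + n))
        (Set.mem_Ioi.mpr (by linarith [hm] : (0:ℝ) < a + n + m))
      linarith
    have h2 : Psi0 ((a + n) + m) - Psi0 (a + n) = ∑ j ∈ Finset.range m, ((a + n) + j)⁻¹ := by
      rw [Psi0_add_nat han m]; ring
    have h3 : ∑ j ∈ Finset.range m, ((a + n) + (j:ℝ))⁻¹ ≤ m * (a + n)⁻¹ := by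
      calc ∑ j ∈ Finset.range m, ((a + n) + (j:ℝ))⁻¹
          ≤ ∑ _j ∈ Finset.range m, (a + n)⁻¹ := by
            apply Finset.sum_le_sum
            intro j _
            have : (0:ℝ) ≤ j := Nat.cast_nonneg j
            apply inv_anti₀ han (by linarith)
        _ = m * (a + n)⁻¹ := by simp [mul_comm]
    linarith
  · simpa using (tendsto_inv_add_atTop a).const_mul (m:ℝ)

lemma inv_sub_inv_eq {a b : ℝ} (ha : 0 < a) (hb : 0 < b) (k : ℕ) :
    (a + k)⁻¹ - (b + k)⁻¹ = (b - a) * ((a + k)⁻¹ * (b + k)⁻¹) := by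
  have h1 : a + (k:ℝ) ≠ 0 := by positivity
  have h2 : b + (k:ℝ) ≠ 0 := by positivity
  field_simp
  ring

lemma summable_inv_sub_inv {a b : ℝ} (ha : 0 < a) (hb : 0 < b) :
    Summable (fun k : ℕ => (a + k)⁻¹ - (b + k)⁻¹) := by
  have : (fun k : ℕ => (a + k)⁻¹ - (b + k)⁻¹)
      = fun k : ℕ => (b - a) * ((a + k)⁻¹ * (b + k)⁻¹) := funext (inv_sub_inv_eq ha hb)
  rw [this]
  exact (summable_inv_mul ha hb).mul_left _

lemma Psi0_sub_eq_tsum_of_le {a b : ℝ} (ha : 0 < a) (hb : 0 < b) (hab : a ≤ b) :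
    Psi0 b - Psi0 a = ∑' k : ℕ, ((a + k)⁻¹ - (b + k)⁻¹) := by
  · have hs := summable_inv_sub_inv ha hb
    have h1 := hs.hasSum.tendsto_sum_nat
    have h2 : Tendsto (fun n : ℕ => ∑ k ∈ Finset.range n, ((a + k)⁻¹ - (b + k)⁻¹))
        atTop (𝓝 (Psi0 b - Psi0 a)) := by
      have h3 := tendsto_Psi0_shift_sub ha hab
      have h4 : (fun n : ℕ => ∑ k ∈ Finset.range n, ((a + k)⁻¹ - (b + k)⁻¹))
          = fun n : ℕ => (Psi0 b - Psi0 a) - (Psi0 (b + n) - Psi0 (a + n)) := by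
        funext n; rw [Psi0_diff_partial ha hb n]; ring
      rw [h4]
      simpa using tendsto_const_nhds.sub h3
    exact tendsto_nhds_unique h2 h1

lemma Psi0_sub_eq_tsum {a b : ℝ} (ha : 0 < a) (hb : 0 < b) :
    Psi0 b - Psi0 a = ∑' k : ℕ, ((a + k)⁻¹ - (b + k)⁻¹) := by
  rcases le_total a b with hab | hab
  · exact Psi0_sub_eq_tsum_of_le ha hb hab
  · have h := Psi0_sub_eq_tsum_of_le hb ha hab
    have : (fun k : ℕ => (a + k)⁻¹ - (b + k)⁻¹) = fun k : ℕ => -((b + k)⁻¹ - (a + k)⁻¹) := by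
      funext k; ring
    rw [this, tsum_neg, ← h]
    ring

/-- The series form of the trigamma function. -/
noncomputable def psi1ser (x : ℝ) : ℝ := ∑' k : ℕ, ((x + k) ^ 2)⁻¹

lemma hasDerivAt_Psi0 {x : ℝ} (hx : 0 < x) : HasDerivAt Psi0 (psi1ser x) x := by
  set s : Set ℝ := Ioi (x/2) with hs
  have hso : IsOpen s := isOpen_Ioi
  have hxs : x ∈ s := by simp [hs]; linarith
  -- the partial sums and their derivatives
  set F : ℕ → ℝ → ℝ := fun n y => ∑ k ∈ Finset.range n, (((1:ℝ) + k)⁻¹ - (y + k)⁻¹) with hF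
  set F' : ℕ → ℝ → ℝ := fun n y => ∑ k ∈ Finset.range n, ((y + k) ^ 2)⁻¹ with hF'
  have key : HasDerivAt (fun y : ℝ => ∑' k : ℕ, (((1:ℝ) + k)⁻¹ - (y + k)⁻¹)) (psi1ser x) x := by
    apply hasDerivAt_of_tendstoUniformlyOn (l := atTop) (f := F) (f' := F')
      (g' := fun y : ℝ => ∑' k : ℕ, ((y + k) ^ 2)⁻¹) hso ?_ ?_ ?_ hxs
    · -- uniform convergence of derivatives
      apply tendstoUniformlyOn_tsum_nat
        (u := fun k : ℕ => ((min (x/2) 1)⁻¹)^2 * (((k:ℝ) + 1) ^ 2)⁻¹)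
        (summable_shift_sq.mul_left _)
      intro k y hy
      have hy' : x/2 < y := hy
      have h0 : (0:ℝ) < x/2 := by linarith
      have h1 : (x/2 + k)⁻¹ ≤ (min (x/2) 1)⁻¹ * ((k:ℝ) + 1)⁻¹ := inv_add_le h0 k
      have h2 : (y + k)⁻¹ ≤ (x/2 + k)⁻¹ := by
        apply inv_anti₀ (by positivity)
        linarith
      have h3 : (0:ℝ) ≤ (y + k)⁻¹ := by
        have : (0:ℝ) < y + k := by have := Nat.cast_nonneg (α := ℝ) k; linarith
        positivity
      have h4 : ((y + k) ^ 2)⁻¹ = ((y + k)⁻¹)^2 := by rw [← inv_pow]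
      rw [Real.norm_eq_abs, abs_of_nonneg (by positivity), h4]
      have h5 : (y + k)⁻¹ ≤ (min (x/2) 1)⁻¹ * ((k:ℝ) + 1)⁻¹ := h2.trans h1
      have h6 : (0:ℝ) ≤ (min (x/2) 1)⁻¹ := by positivity
      calc ((y + k)⁻¹)^2 ≤ ((min (x/2) 1)⁻¹ * ((k:ℝ) + 1)⁻¹)^2 :=
            pow_le_pow_left₀ h3 h5 2
        _ = (min (x/2) 1)⁻¹^2 * (((k:ℝ) + 1) ^ 2)⁻¹ := by rw [mul_pow, inv_pow, inv_pow]
    · -- each partial sum has the partial-sum derivative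
      filter_upwards with n
      intro y hy
      have hy' : x/2 < y := hy
      apply HasDerivAt.fun_sum
      intro k _
      have hyk : y + (k:ℝ) ≠ 0 := by
        have := Nat.cast_nonneg (α := ℝ) k; intro h; linarith
      have := ((hasDerivAt_id y).add_const (k:ℝ)).inv hyk
      have h := (hasDerivAt_const y ((1:ℝ) + k)⁻¹).sub this
      have he : (0:ℝ) - -1 / (y + (k:ℝ)) ^ 2 = ((y + (k:ℝ)) ^ 2)⁻¹ := by
        field_simp
        ring
      simpa [he, Pi.sub_def, Pi.inv_def] using h
    · -- pointwise convergence
      intro y hy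
      have hy0 : 0 < y := lt_trans (by linarith) hy
      exact (summable_inv_sub_inv one_pos hy0).hasSum.tendsto_sum_nat
  have heq : Psi0 =ᶠ[𝓝 x] fun y => Psi0 1 + ∑' k : ℕ, (((1:ℝ) + k)⁻¹ - (y + k)⁻¹) := by
    filter_upwards [eventually_gt_nhds hx] with y hy
    have := Psi0_sub_eq_tsum one_pos hy
    linarith
  simpa using (((hasDerivAt_const x (Psi0 1)).add key).congr_of_eventuallyEq heq)

lemma Psi1_eq {x : ℝ} (hx : 0 < x) : Psi1 x = psi1ser x :=
  (hasDerivAt_Psi0 hx).deriv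


lemma psi1ser_pos {x : ℝ} (hx : 0 < x) : 0 < psi1ser x := by
  have h0 : (0:ℝ) < ((x + (0:ℕ)) ^ 2)⁻¹ := by
    have : (0:ℝ) < x + (0:ℕ) := by simpa using hx
    positivity
  exact Summable.tsum_pos (summable_inv_sq hx) (fun k => by positivity) 0 h0

lemma Psi1_pos {x : ℝ} (hx : 0 < x) : 0 < Psi1 x := by
  rw [Psi1_eq hx]; exact psi1ser_pos hx

lemma Psi1_lt_Psi1 {x y : ℝ} (hx : 0 < x) (hxy : x < y) : Psi1 y < Psi1 x := by
  have hy : 0 < y := hx.trans hxy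
  rw [Psi1_eq hx, Psi1_eq hy]
  refine Summable.tsum_lt_tsum (i := 0) (fun k => ?_) ?_ (summable_inv_sq hy) (summable_inv_sq hx)
  · have hk : (0:ℝ) ≤ k := Nat.cast_nonneg k
    apply inv_anti₀ (by positivity)
    nlinarith
  · have h0 : (0:ℝ) < x + (0:ℕ) := by simpa using hx
    have h1 : (0:ℝ) < y + (0:ℕ) := by simpa using hy
    apply inv_strictAnti₀ (by positivity)
    have : x + (0:ℕ) < y + (0:ℕ) := by simpa using hxy
    nlinarith

lemma Psi1_antitoneOn {x y : ℝ} (hx : 0 < x) (hxy : x ≤ y) : Psi1 y ≤ Psi1 x := by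
  rcases eq_or_lt_of_le hxy with rfl | h
  · exact le_refl _
  · exact (Psi1_lt_Psi1 hx h).le

lemma inv_sq_le_Psi1 {x : ℝ} (hx : 0 < x) : (x ^ 2)⁻¹ ≤ Psi1 x := by
  rw [Psi1_eq hx]
  have := Summable.le_tsum (summable_inv_sq hx) 0 (fun k _ => by positivity)
  simpa [psi1ser] using this

lemma Psi0_lt_Psi0 {x y : ℝ} (hx : 0 < x) (hxy : x < y) : Psi0 x < Psi0 y := by
  have hy : 0 < y := hx.trans hxy
  have h := Psi0_sub_eq_tsum hx hy
  have hpos : 0 < ∑' k : ℕ, ((x + k)⁻¹ - (y + k)⁻¹) := by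
    refine Summable.tsum_pos (summable_inv_sub_inv hx hy) (fun k => ?_) 0 ?_
    · have hk : (0:ℝ) ≤ k := Nat.cast_nonneg k
      have : (y + k)⁻¹ ≤ (x + k)⁻¹ := inv_anti₀ (by positivity) (by linarith)
      linarith
    · have h0 : (0:ℝ) < x + (0:ℕ) := by simpa using hx
      have h1 : x + (0:ℕ) < y + (0:ℕ) := by simpa using hxy
      have := inv_strictAnti₀ h0 h1
      linarith
  linarith

-- continuity of psi1ser on positive reals
lemma continuousAt_Psi1 {x : ℝ} (hx : 0 < x) : ContinuousAt Psi1 x := by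
  have hcont : ContinuousOn psi1ser (Ioi (x/2)) := by
    apply (tendstoUniformlyOn_tsum_nat
      (u := fun k : ℕ => ((min (x/2) 1)⁻¹)^2 * (((k:ℝ) + 1) ^ 2)⁻¹)
      (summable_shift_sq.mul_left _) ?_).continuousOn ?_
    · intro k y hy
      have hy' : x/2 < y := hy
      have h0 : (0:ℝ) < x/2 := by linarith
      have h1 : (x/2 + k)⁻¹ ≤ (min (x/2) 1)⁻¹ * ((k:ℝ) + 1)⁻¹ := inv_add_le h0 k
      have hyk : (0:ℝ) < y + k := by have := Nat.cast_nonneg (α := ℝ) k; linarith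
      have h2 : (y + k)⁻¹ ≤ (x/2 + k)⁻¹ := inv_anti₀ (by positivity) (by linarith)
      have h3 : (0:ℝ) ≤ (y + k)⁻¹ := by positivity
      have h4 : ((y + k) ^ 2)⁻¹ = ((y + k)⁻¹)^2 := by rw [← inv_pow]
      rw [Real.norm_eq_abs, abs_of_nonneg (by positivity), h4]
      calc ((y + k)⁻¹)^2 ≤ ((min (x/2) 1)⁻¹ * ((k:ℝ) + 1)⁻¹)^2 :=
            pow_le_pow_left₀ h3 (h2.trans h1) 2
        _ = (min (x/2) 1)⁻¹^2 * (((k:ℝ) + 1) ^ 2)⁻¹ := by rw [mul_pow, inv_pow, inv_pow]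
    · refine Filter.Frequently.of_forall fun n => ?_
      apply continuousOn_finset_sum
      intro k _
      apply ContinuousOn.inv₀
      · fun_prop
      · intro y hy
        have hy' : x/2 < y := hy
        have hyk : (0:ℝ) < y + k := by have := Nat.cast_nonneg (α := ℝ) k; linarith
        positivity
  have h1 : ContinuousAt psi1ser x :=
    hcont.continuousAt (isOpen_Ioi.mem_nhds (by simp; linarith))
  apply h1.congr
  filter_upwards [eventually_gt_nhds (by linarith : (0:ℝ) < x) ] with y hy
  exact (Psi1_eq hy).symm


section gprops

variable {α : ℝ} (hα : 0 < α)
include hα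

lemma gfun_pos {z : ℝ} (hz : z ∈ Ioo 0 (2*α)) : 0 < gfun α z := by
  obtain ⟨h1, h2⟩ := hz
  exact div_pos (Psi1_pos (by linarith)) (Psi1_pos h1)

lemma gfun_strictMono {z₁ z₂ : ℝ} (h1 : z₁ ∈ Ioo 0 (2*α)) (h2 : z₂ ∈ Ioo 0 (2*α))
    (h12 : z₁ < z₂) : gfun α z₁ < gfun α z₂ := by
  obtain ⟨ha1, hb1⟩ := h1
  obtain ⟨ha2, hb2⟩ := h2
  have hn1 : 0 < Psi1 (2*α - z₁) := Psi1_pos (by linarith)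
  have hn2 : Psi1 (2*α - z₁) < Psi1 (2*α - z₂) := Psi1_lt_Psi1 (by linarith) (by linarith)
  have hd1 : 0 < Psi1 z₁ := Psi1_pos ha1
  have hd2 : 0 < Psi1 z₂ := Psi1_pos ha2
  have hd12 : Psi1 z₂ < Psi1 z₁ := Psi1_lt_Psi1 ha1 h12
  rw [gfun, gfun, div_lt_div_iff₀ hd1 hd2]
  nlinarith

lemma gfun_self : gfun α α = 1 := by
  have : 2*α - α = α := by ring
  rw [gfun, this, div_self (Psi1_pos hα).ne']

lemma gfun_surj {x : ℝ} (hx0 : 0 < x) (hx1 : x ≤ 1) :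
    ∃ z ∈ Ioo 0 (2*α), gfun α z = x := by
  have hPα : 0 < Psi1 α := Psi1_pos hα
  set w₀ : ℝ := min α (Real.sqrt (x / Psi1 α)) with hw₀
  have hw₀pos : 0 < w₀ := lt_min hα (Real.sqrt_pos.mpr (by positivity))
  have hw₀α : w₀ ≤ α := min_le_left _ _
  have hgw₀ : gfun α w₀ ≤ x := by
    have h1 : Psi1 (2*α - w₀) ≤ Psi1 α := Psi1_antitoneOn hα (by linarith)
    have h2 : (w₀^2)⁻¹ ≤ Psi1 w₀ := inv_sq_le_Psi1 hw₀pos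
    have h3 : w₀^2 ≤ x / Psi1 α := by
      have : w₀ ≤ Real.sqrt (x / Psi1 α) := min_le_right _ _
      nlinarith [Real.sq_sqrt (le_of_lt (div_pos hx0 hPα) : (0:ℝ) ≤ x / Psi1 α)]
    have hPw₀ : 0 < Psi1 w₀ := Psi1_pos hw₀pos
    rw [gfun, div_le_iff₀ hPw₀]
    have h4 : (w₀^2)⁻¹ * w₀^2 = 1 := inv_mul_cancel₀ (by positivity)
    have h5 : Psi1 α * (x / Psi1 α) = x := by field_simp
    calc Psi1 (2*α - w₀) ≤ Psi1 α := h1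
      _ = Psi1 α * ((w₀^2)⁻¹ * w₀^2) := by rw [h4]; ring
      _ ≤ Psi1 α * (Psi1 w₀ * (x / Psi1 α)) := by
          have hle : (w₀^2)⁻¹ * w₀^2 ≤ Psi1 w₀ * (x / Psi1 α) := by
            apply mul_le_mul h2 ?_ (by positivity) (le_of_lt hPw₀)
            exact h3
          nlinarith
      _ = x * Psi1 w₀ := by field_simp
  have hcont : ContinuousOn (gfun α) (Icc w₀ α) := by
    apply ContinuousOn.div
    · intro y hy
      have hpos : (0:ℝ) < 2*α - y := by
        obtain ⟨hy1, hy2⟩ := hy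
        linarith
      have hc : ContinuousAt (fun y : ℝ => Psi1 (2*α - y)) y :=
        (continuousAt_Psi1 hpos).comp ((continuous_const.sub continuous_id).continuousAt)
      exact hc.continuousWithinAt
    · intro y hy
      exact (continuousAt_Psi1 (lt_of_lt_of_le hw₀pos hy.1)).continuousWithinAt
    · intro y hy
      exact (Psi1_pos (lt_of_lt_of_le hw₀pos hy.1)).ne'
  have hIVT := intermediate_value_Icc hw₀α hcont
  have hx_mem : x ∈ Icc (gfun α w₀) (gfun α α) := by
    rw [gfun_self hα]
    exact ⟨hgw₀, hx1⟩
  obtain ⟨z, hz, hgz⟩ := hIVT hx_mem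
  exact ⟨z, ⟨lt_of_lt_of_le hw₀pos hz.1, lt_of_le_of_lt hz.2 (by linarith)⟩, hgz⟩

lemma ginv_spec {x : ℝ} (hx0 : 0 < x) (hx1 : x ≤ 1) :
    ginv α x ∈ Ioo 0 (2*α) ∧ gfun α (ginv α x) = x := by
  obtain ⟨z, hz, hgz⟩ := gfun_surj hα hx0 hx1
  have h : ∃ a ∈ Set.Ioo 0 (2*α), gfun α a = x := ⟨z, hz, hgz⟩
  simp only [ginv]
  exact ⟨Function.invFunOn_mem h, Function.invFunOn_eq h⟩

lemma ginv_lt_alpha {x : ℝ} (hx0 : 0 < x) (hx1 : x < 1) : ginv α x < α := by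
  obtain ⟨hmem, hval⟩ := ginv_spec hα hx0 hx1.le
  by_contra h
  push_neg at h
  rcases eq_or_lt_of_le h with h' | h'
  · rw [← h', gfun_self hα] at hval; linarith [hval]
  · have := gfun_strictMono hα ⟨hα, by linarith⟩ hmem h'
    rw [gfun_self hα, hval] at this
    linarith

end gprops

lemma hasDerivAt_phi {α : ℝ} (hα : 0 < α) {y : ℝ} (hy : y ∈ Ioo 0 (2*α)) (x : ℝ) :
    HasDerivAt (fun z => x * Psi0 z + Psi0 (2*α - z)) (x * Psi1 y - Psi1 (2*α - y)) y := by
  have h1 : HasDerivAt Psi0 (Psi1 y) y := by rw [Psi1_eq hy.1]; exact hasDerivAt_Psi0 hy.1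
  have hy2 : 0 < 2*α - y := by have := hy.2; linarith
  have h3 : HasDerivAt Psi0 (Psi1 (2*α - y)) (2*α - y) := by
    rw [Psi1_eq hy2]; exact hasDerivAt_Psi0 hy2
  have h4 : HasDerivAt (fun z : ℝ => 2*α - z) (-1) y := by
    simpa using (hasDerivAt_id y).const_sub (2*α)
  have h2 : HasDerivAt (fun z : ℝ => Psi0 (2*α - z)) (Psi1 (2*α - y) * (-1)) y :=
    h3.comp y h4
  have := (h1.const_mul x).add h2
  simpa [mul_comm, sub_eq_add_neg, Pi.add_def] using this

lemma phi_max {α x : ℝ} (hα : 0 < α) (hx0 : 0 < x) (hx1 : x ≤ 1) {z : ℝ}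
    (hz : z ∈ Ioo 0 (2*α)) :
    x * Psi0 z + Psi0 (2*α - z) ≤ x * Psi0 (ginv α x) + Psi0 (2*α - ginv α x) := by
  obtain ⟨hw, hgw⟩ := ginv_spec hα hx0 hx1
  set w := ginv α x with hwdef
  set φ : ℝ → ℝ := fun z => x * Psi0 z + Psi0 (2*α - z) with hφ
  have hderiv : ∀ y ∈ Ioo (0:ℝ) (2*α), deriv φ y = x * Psi1 y - Psi1 (2*α - y) :=
    fun y hy => (hasDerivAt_phi hα hy x).deriv
  rcases lt_trichotomy z w with h | h | h
  · have hsub : Icc z w ⊆ Ioo 0 (2*α) := fun y hy =>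
      ⟨lt_of_lt_of_le hz.1 hy.1, lt_of_le_of_lt hy.2 hw.2⟩
    have hmono : StrictMonoOn φ (Icc z w) := by
      apply strictMonoOn_of_deriv_pos (convex_Icc z w)
      · intro y hy
        exact (hasDerivAt_phi hα (hsub hy) x).continuousAt.continuousWithinAt
      · intro y hy
        rw [interior_Icc] at hy
        have hy' : y ∈ Ioo (0:ℝ) (2*α) := hsub (Ioo_subset_Icc_self hy)
        rw [hderiv y hy']
        have hlt : gfun α y < x := by
          have := gfun_strictMono hα hy' hw hy.2
          rwa [hgw] at this
        have hP : 0 < Psi1 y := Psi1_pos hy'.1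
        have heq : Psi1 (2*α - y) = gfun α y * Psi1 y := by
          rw [gfun]; field_simp
        rw [heq]
        nlinarith
    exact (hmono (left_mem_Icc.mpr h.le) (right_mem_Icc.mpr h.le) h).le
  · rw [h]
  · have hsub : Icc w z ⊆ Ioo 0 (2*α) := fun y hy =>
      ⟨lt_of_lt_of_le hw.1 hy.1, lt_of_le_of_lt hy.2 hz.2⟩
    have hanti : StrictAntiOn φ (Icc w z) := by
      apply strictAntiOn_of_deriv_neg (convex_Icc w z)
      · intro y hy
        exact (hasDerivAt_phi hα (hsub hy) x).continuousAt.continuousWithinAt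
      · intro y hy
        rw [interior_Icc] at hy
        have hy' : y ∈ Ioo (0:ℝ) (2*α) := hsub (Ioo_subset_Icc_self hy)
        rw [hderiv y hy']
        have hlt : x < gfun α y := by
          have := gfun_strictMono hα hw hy' hy.1
          rwa [hgw] at this
        have hP : 0 < Psi1 y := Psi1_pos hy'.1
        have heq : Psi1 (2*α - y) = gfun α y * Psi1 y := by
          rw [gfun]; field_simp
        rw [heq]
        nlinarith
    exact (hanti (left_mem_Icc.mpr h.le) (right_mem_Icc.mpr h.le) h).le

lemma term_ineq {α w : ℝ} (hα : 0 < α) (hw2 : α/2 < w) (hwα : w < α) (k : ℕ) :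
    ((w + k)^2)⁻¹ - ((2*α - w + k)^2)⁻¹ ≤ 8/α * ((w + k)⁻¹ - (α + k)⁻¹) := by
  have hk : (0:ℝ) ≤ k := Nat.cast_nonneg k
  have hu : (0:ℝ) < w + k := by linarith
  have hum : w + (k:ℝ) < α + k := by linarith
  have hm : (0:ℝ) < α + k := by linarith
  have hv : 2*α - w + (k:ℝ) = 2*(α + k) - (w + k) := by ring
  set u := w + (k:ℝ) with hudef
  set m := α + (k:ℝ) with hmdef
  have hαu : α ≤ 2*u := by rw [hudef]; linarith
  rw [hv]
  have hmv : m ≤ 2*m - u := by linarith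
  have h2mu : (0:ℝ) < 2*m - u := by linarith
  have e1 : (u^2)⁻¹ - ((2*m-u)^2)⁻¹ = (4*m*(m-u)) / (u^2*(2*m-u)^2) := by
    field_simp
    ring
  have e2 : 8/α * (u⁻¹ - m⁻¹) = (8*(m-u)) / (α*u*m) := by
    rw [inv_sub_inv hu.ne' hm.ne', div_mul_div_comm]
    ring_nf
  rw [e1, e2, div_le_div_iff₀ (by positivity) (by positivity)]
  have hsq : m^2 ≤ (2*m-u)^2 := by nlinarith
  have hmu : (0:ℝ) ≤ m - u := by linarith
  nlinarith [mul_le_mul_of_nonneg_right hαu (mul_nonneg (mul_nonneg hu.le (sq_nonneg m)) hmu),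
    mul_le_mul_of_nonneg_left (mul_le_mul_of_nonneg_right hsq hmu)
      (by positivity : (0:ℝ) ≤ 8*u^2)]

lemma psi0_gap {α : ℝ} (hα : 0 < α) :
    ∃ c : ℝ, 0 < c ∧ ∀ x : ℝ, 0 < x → x < 1 →
      c * (1 - x) ≤ Psi0 α - Psi0 (ginv α x) := by
  have hPα : 0 < Psi1 α := Psi1_pos hα
  have hd : 0 < Psi0 α - Psi0 (α/2) := by
    have := Psi0_lt_Psi0 (by linarith : (0:ℝ) < α/2) (by linarith : α/2 < α)
    linarith
  refine ⟨min (Psi0 α - Psi0 (α/2)) (α * Psi1 α / 8), lt_min hd (by positivity), ?_⟩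
  intro x hx0 hx1
  obtain ⟨hwmem, hgw⟩ := ginv_spec hα hx0 hx1.le
  set w := ginv α x with hwdef
  have hwα : w < α := ginv_lt_alpha hα hx0 hx1
  have hw0 : 0 < w := hwmem.1
  set c := min (Psi0 α - Psi0 (α/2)) (α * Psi1 α / 8) with hcdef
  have hc1 : c ≤ Psi0 α - Psi0 (α/2) := min_le_left _ _
  have hc2 : c ≤ α * Psi1 α / 8 := min_le_right _ _
  have hcpos : 0 < c := lt_min hd (by positivity)
  rcases le_or_gt w (α/2) with hcase | hcase
  · have h1 : Psi0 w ≤ Psi0 (α/2) := by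
      rcases eq_or_lt_of_le hcase with h | h
      · rw [h]
      · exact (Psi0_lt_Psi0 hw0 h).le
    nlinarith
  · have hw2α : 0 < 2*α - w := by linarith
    have hA : Psi1 w - Psi1 (2*α - w)
        = ∑' k : ℕ, (((w + k)^2)⁻¹ - ((2*α - w + k)^2)⁻¹) := by
      rw [Psi1_eq hw0, Psi1_eq hw2α, psi1ser, psi1ser,
        ← Summable.tsum_sub (summable_inv_sq hw0) (summable_inv_sq hw2α)]
    have hB : Psi0 α - Psi0 w = ∑' k : ℕ, ((w + k)⁻¹ - (α + k)⁻¹) :=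
      Psi0_sub_eq_tsum hw0 hα
    have hAB : Psi1 w - Psi1 (2*α - w) ≤ 8/α * (Psi0 α - Psi0 w) := by
      rw [hA, hB, ← tsum_mul_left]
      apply Summable.tsum_le_tsum (fun k => term_ineq hα hcase hwα k)
        ((summable_inv_sq hw0).sub (summable_inv_sq hw2α))
        ((summable_inv_sub_inv hw0 hα).mul_left _)
    have hPw : Psi1 α ≤ Psi1 w := Psi1_antitoneOn hw0 hwα.le
    have hApos : 0 ≤ Psi1 w - Psi1 (2*α - w) := by
      have := Psi1_lt_Psi1 hw0 (by linarith : w < 2*α - w)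
      linarith
    have hPwpos : 0 < Psi1 w := Psi1_pos hw0
    have h1x : (1 - x) * Psi1 w = Psi1 w - Psi1 (2*α - w) := by
      have : x * Psi1 w = Psi1 (2*α - w) := by
        rw [← hgw, gfun]
        field_simp
      nlinarith [this]
    have hchain : (1 - x) * Psi1 α ≤ 8/α * (Psi0 α - Psi0 w) := by
      calc (1 - x) * Psi1 α ≤ (1 - x) * Psi1 w := by nlinarith
        _ = Psi1 w - Psi1 (2*α - w) := h1x
        _ ≤ 8/α * (Psi0 α - Psi0 w) := hAB
    have h8 : (0:ℝ) < 8/α := by positivity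
    calc c * (1 - x) ≤ (α * Psi1 α / 8) * (1 - x) := by nlinarith
      _ ≤ Psi0 α - Psi0 w := by
          have := mul_le_mul_of_nonneg_left hchain (le_of_lt (by positivity : (0:ℝ) < α/8))
          calc (α * Psi1 α / 8) * (1 - x) = (α/8) * ((1 - x) * Psi1 α) := by ring
            _ ≤ (α/8) * (8/α * (Psi0 α - Psi0 w)) := this
            _ = Psi0 α - Psi0 w := by field_simp

lemma fShape_ge {α x' : ℝ} (hα : 0 < α) {z : ℝ} (hz : z ∈ Ioo 0 (2*α))
    (hx'0 : 0 ≤ x') (hx'1 : x' ≤ 1) :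
    x' * Psi0 z + Psi0 (2*α - z) ≤ fShape α x' := by
  rcases eq_or_lt_of_le hx'0 with h | h
  · rw [fShape, if_pos h.symm, ← h, zero_mul, zero_add]
    have h1 : 2*α - z < 2*α := by have := hz.1; linarith
    have h2 : (0:ℝ) < 2*α - z := by have := hz.2; linarith
    exact (Psi0_lt_Psi0 h2 h1).le
  · rw [fShape, if_neg h.ne']
    exact phi_max hα h hx'1 hz


end ShapeAux

open Real in
/-- Linear lower bound on the shape-function gap. -/
theorem shape_function_linear_bound (α κ δ : ℝ) (hα : 0 < α) (hκ : 0 < κ)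
    (hδ : δ ∈ Set.Ioo 0 (1/3 : ℝ)) :
    ∃ N₀ C₀ : ℝ, 0 < N₀ ∧ 0 < C₀ ∧
      ∀ N T : ℕ, N₀ ≤ N → 1 ≤ T →
        (T : ℝ) / N ≤ 1 - κ * (N : ℝ) ^ (δ - 1/3 : ℝ) →
        ∀ k : ℕ, 1 ≤ k → k ≤ T →
          -(N : ℝ) * fShape α (((T : ℝ) - k) / N) - k * Psi0 α
              + C₀ * k * (N : ℝ) ^ (δ - 1/3 : ℝ)
            ≤ -(N : ℝ) * fShape α ((T : ℝ) / N) := by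
  obtain ⟨c, hc, hbound⟩ := psi0_gap hα
  refine ⟨1, c * κ, one_pos, by positivity, ?_⟩
  intro N T hN hT hTN k hk1 hkT
  have hN0 : (0:ℝ) < N := lt_of_lt_of_le one_pos hN
  have hT0 : (0:ℝ) < T := by exact_mod_cast Nat.lt_of_lt_of_le Nat.zero_lt_one hT
  have hpow : (0:ℝ) < (N:ℝ) ^ (δ - 1/3 : ℝ) := Real.rpow_pos_of_pos hN0 _
  set ε := κ * (N:ℝ) ^ (δ - 1/3 : ℝ) with hε
  have hεpos : 0 < ε := by positivity
  set x := (T:ℝ)/N with hx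
  have hx0 : 0 < x := div_pos hT0 hN0
  have hx1 : x < 1 := lt_of_le_of_lt hTN (by linarith)
  obtain ⟨hwmem, hgw⟩ := ginv_spec hα hx0 hx1.le
  set w := ginv α x with hwdef
  have hfx : fShape α x = x * Psi0 w + Psi0 (2*α - w) := if_neg hx0.ne'
  have hk0 : (0:ℝ) < k := by exact_mod_cast Nat.lt_of_lt_of_le Nat.zero_lt_one hk1
  have hkT' : (k:ℝ) ≤ T := by exact_mod_cast hkT
  set x' := ((T:ℝ) - k)/N with hx'
  have hx'0 : 0 ≤ x' := div_nonneg (by linarith) hN0.le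
  have hTN' : (T:ℝ) < N := by
    rw [div_lt_one hN0] at hx1
    exact hx1
  have hx'1 : x' ≤ 1 := by
    rw [hx', div_le_one hN0]
    linarith
  have hkey : x' * Psi0 w + Psi0 (2*α - w) ≤ fShape α x' := fShape_ge hα hwmem hx'0 hx'1
  have hgap : c * (1 - x) ≤ Psi0 α - Psi0 w := hbound x hx0 hx1
  have h1x : ε ≤ 1 - x := by rw [hε]; linarith [hTN]
  have hNx : (N:ℝ) * x = T := by rw [hx]; field_simp
  have hNx' : (N:ℝ) * x' = (T:ℝ) - k := by rw [hx']; field_simp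
  have e1 : -(N:ℝ) * fShape α x = -((T:ℝ) * Psi0 w) - N * Psi0 (2*α - w) := by
    rw [hfx, ← hNx]; ring
  have e2 : -(N:ℝ) * fShape α x' ≤ -(((T:ℝ) - k) * Psi0 w) - N * Psi0 (2*α - w) := by
    have h' : (N:ℝ) * (x' * Psi0 w + Psi0 (2*α - w)) ≤ N * fShape α x' :=
      mul_le_mul_of_nonneg_left hkey hN0.le
    have h'' : (N:ℝ) * (x' * Psi0 w + Psi0 (2*α - w))
        = ((T:ℝ) - k) * Psi0 w + N * Psi0 (2*α - w) := by rw [← hNx']; ring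
    linarith
  have hfin : (k:ℝ) * (Psi0 w - Psi0 α) + (k:ℝ) * (c * ε) ≤ 0 := by
    have ht : Psi0 w - Psi0 α ≤ -(c * (1 - x)) := by linarith
    have h2 : c * ε ≤ c * (1 - x) := mul_le_mul_of_nonneg_left h1x hc.le
    nlinarith
  calc -(N : ℝ) * fShape α x' - k * Psi0 α + (c * κ) * k * (N:ℝ) ^ (δ - 1/3 : ℝ)
      ≤ (-(((T:ℝ) - k) * Psi0 w) - N * Psi0 (2*α - w)) - k * Psi0 α
          + (c * κ) * k * (N:ℝ) ^ (δ - 1/3 : ℝ) := by linarith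
    _ = (-((T:ℝ) * Psi0 w) - N * Psi0 (2*α - w)) + ((k:ℝ) * (Psi0 w - Psi0 α)
          + (k:ℝ) * (c * ε)) := by rw [hε]; ring
    _ ≤ -((T:ℝ) * Psi0 w) - N * Psi0 (2*α - w) := by linarith
    _ = -(N : ℝ) * fShape α x := e1.symm
end

section
/- Fix α > 0. The function f is differentiable on (0,∞) and for every x ∈ (0,∞) its derivative satisfies f′(x) = Ψ0(g^{-1}(x)). -/
open MeasureTheory ProbabilityTheory Real

section PsiAuxSection
open Real Filter Topology Finset

namespace PsiAux


noncomputable def T1 (x : ℝ) : ℝ := ∑' n : ℕ, ((x + n) ^ 2)⁻¹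
noncomputable def T2 (x : ℝ) : ℝ := ∑' n : ℕ, 2 * ((x + n) ^ 3)⁻¹
noncomputable def D0 (x : ℝ) : ℝ :=
  -Real.eulerMascheroniConstant + ∑' n : ℕ, (((n : ℝ) + 1)⁻¹ - (x + n)⁻¹)

lemma key_lower {x : ℝ} (hx : 0 < x) (n : ℕ) : min x 1 * ((n : ℝ) + 1) ≤ x + n := by
  have h1 : min x 1 ≤ x := min_le_left _ _
  have h2 : min x 1 ≤ 1 := min_le_right _ _
  have hn : (0:ℝ) ≤ n := Nat.cast_nonneg n
  nlinarith

lemma min_pos {x : ℝ} (hx : 0 < x) : 0 < min x 1 := lt_min hx one_pos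

lemma summable_sq : Summable (fun n : ℕ => (((n : ℝ) + 1) ^ 2)⁻¹) := by
  have := Real.summable_one_div_nat_pow.mpr (le_refl 2)
  have h := (summable_nat_add_iff 1).mpr this
  simpa [one_div] using h

lemma summable_cube : Summable (fun n : ℕ => (((n : ℝ) + 1) ^ 3)⁻¹) := by
  have : Summable (fun n : ℕ => 1 / (n : ℝ) ^ 3) :=
    Real.summable_one_div_nat_pow.mpr (by norm_num)
  have h := (summable_nat_add_iff 1).mpr this
  simpa [one_div] using h

lemma summable_T1 {x : ℝ} (hx : 0 < x) : Summable (fun n : ℕ => ((x + n) ^ 2)⁻¹) := by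
  refine Summable.of_nonneg_of_le (fun n => by positivity) (fun n => ?_)
    (summable_sq.mul_left ((min x 1) ^ 2)⁻¹)
  have h := key_lower hx n
  have hm := min_pos hx
  have hxn : (0:ℝ) < x + n := by positivity
  rw [← mul_inv]
  refine inv_anti₀ (by positivity) ?_
  have : min x 1 ^ 2 * ((n:ℝ)+1)^2 = (min x 1 * ((n:ℝ)+1))^2 := by ring
  rw [this]
  exact pow_le_pow_left₀ (by positivity) h 2

lemma summable_T2 {x : ℝ} (hx : 0 < x) : Summable (fun n : ℕ => 2 * ((x + n) ^ 3)⁻¹) := by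
  refine Summable.mul_left 2 ?_
  refine Summable.of_nonneg_of_le (fun n => by positivity) (fun n => ?_)
    (summable_cube.mul_left ((min x 1) ^ 3)⁻¹)
  have h := key_lower hx n
  have hm := min_pos hx
  have hxn : (0:ℝ) < x + n := by positivity
  rw [← mul_inv]
  refine inv_anti₀ (by positivity) ?_
  have : min x 1 ^ 3 * ((n:ℝ)+1)^3 = (min x 1 * ((n:ℝ)+1))^3 := by ring
  rw [this]
  exact pow_le_pow_left₀ (by positivity) h 3

lemma term_eq {x : ℝ} (hx : 0 < x) (n : ℕ) :
    ((n : ℝ) + 1)⁻¹ - (x + n)⁻¹ = (x - 1) / (((n:ℝ) + 1) * (x + n)) := by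
  have h1 : ((n : ℝ) + 1) ≠ 0 := by positivity
  have h2 : (x + n) ≠ 0 := by positivity
  field_simp
  ring

lemma term_bound {a b x : ℝ} (ha : 0 < a) (hax : a ≤ x) (hxb : x ≤ b) (n : ℕ) :
    |((n : ℝ) + 1)⁻¹ - (x + n)⁻¹| ≤ ((b + 1) / min a 1) * (((n:ℝ) + 1) ^ 2)⁻¹ := by
  have hx : 0 < x := lt_of_lt_of_le ha hax
  rw [term_eq hx]
  have h1 : (0:ℝ) < (n:ℝ) + 1 := by positivity
  have h2 : (0:ℝ) < x + n := by positivity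
  rw [abs_div, abs_of_pos (by positivity : (0:ℝ) < ((n:ℝ)+1) * (x+n))]
  rw [div_le_iff₀ (by positivity)]
  have hxm : min a 1 * ((n : ℝ) + 1) ≤ x + n := by
    refine le_trans ?_ (key_lower hx n)
    have : min a 1 ≤ min x 1 := min_le_min hax le_rfl
    nlinarith [Nat.cast_nonneg (α := ℝ) n]
  have hma : 0 < min a 1 := lt_min ha one_pos
  have habs : |x - 1| ≤ b + 1 := by
    rw [abs_le]; constructor <;> nlinarith
  calc |x - 1| ≤ b + 1 := habs
  _ ≤ (b+1) / min a 1 * (((n:ℝ)+1)^2)⁻¹ * (((n:ℝ)+1) * (min a 1 * ((n:ℝ)+1))) := by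
        rw [div_mul_eq_mul_div, div_mul_eq_mul_div, le_div_iff₀ hma]
        have : (((n:ℝ)+1)^2)⁻¹ * (((n:ℝ)+1) * (min a 1 * ((n:ℝ)+1))) = min a 1 := by
          field_simp
        rw [mul_assoc, this]
  _ ≤ (b+1) / min a 1 * (((n:ℝ)+1)^2)⁻¹ * (((n:ℝ)+1) * (x + n)) := by
        have hb1 : (0:ℝ) < b + 1 := by nlinarith
        gcongr

lemma summable_D0 {x : ℝ} (hx : 0 < x) :
    Summable (fun n : ℕ => ((n : ℝ) + 1)⁻¹ - (x + n)⁻¹) := by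
  refine Summable.of_norm ?_
  refine Summable.of_nonneg_of_le (fun n => norm_nonneg _) (fun n => ?_)
    (summable_sq.mul_left ((x + 1) / min x 1))
  exact term_bound hx le_rfl le_rfl n


noncomputable def Fn (n : ℕ) (y : ℝ) : ℝ :=
  y * Real.log n + Real.log (Nat.factorial n) - ∑ j ∈ Finset.range (n + 1), Real.log (y + j)

noncomputable def Fn' (n : ℕ) (y : ℝ) : ℝ :=
  Real.log n - ∑ j ∈ Finset.range (n + 1), (y + j)⁻¹

lemma hasDerivAt_Fn (n : ℕ) {y : ℝ} (hy : 0 < y) : HasDerivAt (Fn n) (Fn' n y) y := by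
  have h1 : HasDerivAt (fun y : ℝ => y * Real.log n) (Real.log n) y := by
    simpa using (hasDerivAt_id y).mul_const (Real.log n)
  have h2 : HasDerivAt (fun y : ℝ => ∑ j ∈ Finset.range (n+1), Real.log (y + j))
      (∑ j ∈ Finset.range (n+1), (y + j)⁻¹) y := by
    refine HasDerivAt.fun_sum (fun j _ => ?_)
    have h : HasDerivAt (fun y : ℝ => y + j) 1 y := (hasDerivAt_id y).add_const _
    have hne : y + (j:ℝ) ≠ 0 := by positivity
    simpa [one_div] using h.log hne
  have := (h1.add_const (Real.log (Nat.factorial n))).fun_sub h2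
  exact this

lemma Fn_eq_log_GammaSeq {n : ℕ} (hn : 1 ≤ n) {y : ℝ} (hy : 0 < y) :
    Fn n y = Real.log (Real.GammaSeq y n) := by
  have hn0 : (0:ℝ) < n := by exact_mod_cast hn
  have hprod : (0:ℝ) < ∏ j ∈ Finset.range (n+1), (y + j) :=
    Finset.prod_pos (fun j _ => by positivity)
  have hfac : (0:ℝ) < (Nat.factorial n : ℝ) := by exact_mod_cast Nat.factorial_pos n
  rw [Real.GammaSeq, Real.log_div (by positivity) hprod.ne', Real.log_mul (by positivity) hfac.ne',
    Real.log_rpow hn0, Real.log_prod (fun j _ => by positivity)]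
  rfl

lemma tendsto_Fn {y : ℝ} (hy : 0 < y) :
    Tendsto (fun n => Fn n y) atTop (𝓝 (Real.log (Real.Gamma y))) := by
  have h := Real.GammaSeq_tendsto_Gamma y
  have hG : 0 < Real.Gamma y := Real.Gamma_pos_of_pos hy
  have h2 := ((Real.continuousAt_log hG.ne').tendsto.comp h : Tendsto
    (fun n => Real.log (Real.GammaSeq y n)) atTop (𝓝 (Real.log (Real.Gamma y))))
  refine h2.congr' ?_
  filter_upwards [eventually_ge_atTop 1] with n hn
  exact (Fn_eq_log_GammaSeq hn hy).symm

noncomputable def cseq (n : ℕ) : ℝ := Real.log n - (harmonic (n+1) : ℝ)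

lemma tendsto_log_succ_sub : Tendsto (fun n : ℕ => Real.log (n+1) - Real.log n) atTop (𝓝 0) := by
  have h : Tendsto (fun x : ℝ => Real.log (1 + 1/x)) atTop (𝓝 0) := by
    simpa only [add_zero, Real.log_one, id] using
      ((tendsto_const_nhds.div_atTop tendsto_id).const_add 1).log (by positivity)
  have h2 := h.comp tendsto_natCast_atTop_atTop (α := ℕ)
  refine h2.congr' ?_
  filter_upwards [eventually_gt_atTop 0] with n hn
  have hn0 : (0:ℝ) < n := by exact_mod_cast hn
  rw [Function.comp_apply, ← Real.log_div (by positivity) hn0.ne', add_div, div_self hn0.ne']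


lemma tendsto_cseq : Tendsto cseq atTop (𝓝 (-Real.eulerMascheroniConstant)) := by
  have h1 : Tendsto (fun n : ℕ => ((harmonic (n+1) : ℝ) - Real.log (n+1))) atTop
      (𝓝 Real.eulerMascheroniConstant) := by
    have := Real.tendsto_harmonic_sub_log.comp (tendsto_add_atTop_nat 1)
    refine this.congr (fun n => ?_)
    simp [Function.comp]

  have h2 := (h1.add tendsto_log_succ_sub).neg
  rw [add_zero] at h2
  refine h2.congr (fun n => ?_)
  simp only [cseq]
  ring


lemma harmonic_cast (n : ℕ) : (harmonic n : ℝ) = ∑ j ∈ Finset.range n, ((j:ℝ) + 1)⁻¹ := by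
  rw [harmonic]
  push_cast
  rfl

lemma Fn'_decomp (n : ℕ) (y : ℝ) :
    Fn' n y = cseq n + ∑ j ∈ Finset.range (n+1), (((j:ℝ) + 1)⁻¹ - (y + j)⁻¹) := by
  rw [Fn', cseq, Finset.sum_sub_distrib, harmonic_cast]
  ring

lemma tendstoUniformly_const {c : ℕ → ℝ} {l : ℝ} (h : Tendsto c atTop (𝓝 l)) (K : Set ℝ) :
    TendstoUniformlyOn (fun n (_ : ℝ) => c n) (fun _ => l) atTop K := by
  rw [Metric.tendstoUniformlyOn_iff]
  intro ε hε
  filter_upwards [Metric.tendsto_nhds.mp h ε hε] with n hn y _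
  rwa [dist_comm]

lemma tendstoUniformlyOn_series {a b : ℝ} (ha : 0 < a) :
    TendstoUniformlyOn
      (fun (n : ℕ) (y : ℝ) => ∑ j ∈ Finset.range (n+1), (((j:ℝ) + 1)⁻¹ - (y + j)⁻¹))
      (fun y => ∑' j : ℕ, (((j:ℝ) + 1)⁻¹ - (y + j)⁻¹)) atTop (Set.Icc a b) := by
  have base := tendstoUniformlyOn_tsum_nat (f := fun (j : ℕ) (y : ℝ) => ((j:ℝ) + 1)⁻¹ - (y + j)⁻¹)
    (u := fun j => ((b + 1) / min a 1) * (((j:ℝ) + 1) ^ 2)⁻¹)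
    (summable_sq.mul_left _) (fun j y hy => by
      simpa [Real.norm_eq_abs] using term_bound ha hy.1 hy.2 j) (s := Set.Icc a b)
  rw [Metric.tendstoUniformlyOn_iff] at base ⊢
  intro ε hε
  exact (tendsto_add_atTop_nat 1).eventually (base ε hε)

lemma tendstoLocallyUniformly_Fn' :
    TendstoLocallyUniformlyOn Fn' D0 atTop (Set.Ioi 0) := by
  rw [tendstoLocallyUniformlyOn_iff_forall_isCompact isOpen_Ioi]
  intro K hK hKc
  rcases K.eq_empty_or_nonempty with rfl | hne
  · simp [TendstoUniformlyOn]
  · have ha : sInf K ∈ K := hKc.sInf_mem hne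
    have hb : sSup K ∈ K := hKc.sSup_mem hne
    have hapos : 0 < sInf K := hK ha
    have hsub : K ⊆ Set.Icc (sInf K) (sSup K) := fun y hy =>
      ⟨csInf_le hKc.bddBelow hy, le_csSup hKc.bddAbove hy⟩
    have h1 := (tendstoUniformly_const tendsto_cseq K).add
      (((tendstoUniformlyOn_series (b := sSup K) hapos)).mono hsub)
    refine (h1.congr ?_).congr_right ?_
    · filter_upwards with n y hy
      exact (Fn'_decomp n y).symm
    · intro y hy
      rfl

lemma hasDerivAt_logGamma {x : ℝ} (hx : 0 < x) :
    HasDerivAt (fun y => Real.log (Real.Gamma y)) (D0 x) x := by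
  refine hasDerivAt_of_tendstoLocallyUniformlyOn isOpen_Ioi tendstoLocallyUniformly_Fn'
    (Filter.Eventually.of_forall (fun n y hy => hasDerivAt_Fn n hy))
    (fun y hy => tendsto_Fn hy) hx



-- assumed from previous chunks:

lemma bound_pow {c y : ℝ} (hc : 0 < c) (hcy : c ≤ y) (n : ℕ) (k : ℕ) (hk : 1 ≤ k) :
    ((y + n) ^ k)⁻¹ ≤ ((min c 1) ^ k)⁻¹ * (((n:ℝ) + 1) ^ k)⁻¹ := by
  have hy : 0 < y := lt_of_lt_of_le hc hcy
  have h1 : min c 1 * ((n : ℝ) + 1) ≤ y + n := by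
    refine le_trans ?_ (key_lower hy n)
    have : min c 1 ≤ min y 1 := min_le_min hcy le_rfl
    nlinarith [Nat.cast_nonneg (α := ℝ) n]
  have hm : 0 < min c 1 := lt_min hc one_pos
  rw [← mul_inv, ← mul_pow]
  refine inv_anti₀ (by positivity) (pow_le_pow_left₀ (by positivity) h1 k)

lemma hasDerivAt_term_inv {y : ℝ} (hy : 0 < y) (n : ℕ) :
    HasDerivAt (fun z : ℝ => (((n:ℝ) + 1)⁻¹ - (z + n)⁻¹)) (((y + n) ^ 2)⁻¹) y := by
  have h : HasDerivAt (fun z : ℝ => z + (n:ℝ)) 1 y := (hasDerivAt_id y).add_const _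
  have hne : y + (n:ℝ) ≠ 0 := by positivity
  have := (h.inv hne).const_sub (((n:ℝ) + 1)⁻¹)
  refine this.congr_deriv ?_
  ring

lemma hasDerivAt_term_sq {y : ℝ} (hy : 0 < y) (n : ℕ) :
    HasDerivAt (fun z : ℝ => ((z + n) ^ 2)⁻¹) (-(2 * ((y + n) ^ 3)⁻¹)) y := by
  have h : HasDerivAt (fun z : ℝ => z + (n:ℝ)) 1 y := (hasDerivAt_id y).add_const _
  have hp : HasDerivAt (fun z : ℝ => (z + (n:ℝ)) ^ 2) (2 * (y + n) ^ 1 * 1) y := h.pow 2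
  have hne : (y + (n:ℝ)) ^ 2 ≠ 0 := by positivity
  have := hp.inv hne
  refine this.congr_deriv ?_
  have hyn : y + (n:ℝ) ≠ 0 := by positivity
  field_simp

lemma hasDerivAt_D0 {x : ℝ} (hx : 0 < x) : HasDerivAt D0 (T1 x) x := by
  have hx2 : 0 < x/2 := by linarith
  have key : HasDerivAt (fun z : ℝ => ∑' n : ℕ, (((n : ℝ) + 1)⁻¹ - (z + n)⁻¹))
      (∑' n : ℕ, ((x + n) ^ 2)⁻¹) x := by
    refine hasDerivAt_tsum_of_isPreconnected
      (g := fun (n : ℕ) (z : ℝ) => ((n : ℝ) + 1)⁻¹ - (z + n)⁻¹)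
      (g' := fun (n : ℕ) (z : ℝ) => ((z + n) ^ 2)⁻¹)
      (u := fun n : ℕ => ((min (x/2) 1) ^ 2)⁻¹ * (((n:ℝ) + 1) ^ 2)⁻¹)
      (summable_sq.mul_left _) isOpen_Ioi (isPreconnected_Ioi)
      (fun n y hy => hasDerivAt_term_inv (lt_trans hx2 hy) n)
      (fun n y hy => ?_) (Set.mem_Ioi.mpr (by linarith : x/2 < x)) (summable_D0 hx)
      (Set.mem_Ioi.mpr (by linarith : x/2 < x))
    have hy : x/2 < y := hy
    have hyn : (0:ℝ) < y + n := by have := lt_trans hx2 hy; positivity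
    rw [Real.norm_eq_abs, abs_of_pos (by positivity)]
    exact bound_pow hx2 hy.le n 2 (by norm_num)
  exact key.const_add _

lemma Psi0_eq {x : ℝ} (hx : 0 < x) : Psi0 x = D0 x := (hasDerivAt_logGamma hx).deriv

lemma hasDerivAt_Psi0 {x : ℝ} (hx : 0 < x) : HasDerivAt Psi0 (T1 x) x := by
  refine (hasDerivAt_D0 hx).congr_of_eventuallyEq ?_
  filter_upwards [Ioi_mem_nhds hx] with y hy
  exact Psi0_eq hy

lemma Psi1_eq {x : ℝ} (hx : 0 < x) : Psi1 x = T1 x := (hasDerivAt_Psi0 hx).deriv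

lemma hasDerivAt_T1 {x : ℝ} (hx : 0 < x) : HasDerivAt T1 (-(T2 x)) x := by
  have hx2 : 0 < x/2 := by linarith
  have key : HasDerivAt (fun z : ℝ => ∑' n : ℕ, ((z + n) ^ 2)⁻¹)
      (∑' n : ℕ, -(2 * ((x + n) ^ 3)⁻¹)) x := by
    refine hasDerivAt_tsum_of_isPreconnected
      (g := fun (n : ℕ) (z : ℝ) => ((z + n) ^ 2)⁻¹)
      (g' := fun (n : ℕ) (z : ℝ) => -(2 * ((z + n) ^ 3)⁻¹))
      (u := fun n : ℕ => 2 * (((min (x/2) 1) ^ 3)⁻¹ * (((n:ℝ) + 1) ^ 3)⁻¹))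
      ((summable_cube.mul_left _).mul_left 2) isOpen_Ioi (isPreconnected_Ioi)
      (fun n y hy => hasDerivAt_term_sq (lt_trans hx2 hy) n)
      (fun n y hy => ?_) (Set.mem_Ioi.mpr (by linarith : x/2 < x)) (summable_T1 hx)
      (Set.mem_Ioi.mpr (by linarith : x/2 < x))
    have hy : x/2 < y := hy
    have hyn : (0:ℝ) < y + n := by have := lt_trans hx2 hy; positivity
    show ‖-(2 * ((y + (n:ℝ)) ^ 3)⁻¹)‖ ≤ 2 * (((min (x/2) 1) ^ 3)⁻¹ * (((n:ℝ) + 1) ^ 3)⁻¹)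
    rw [Real.norm_eq_abs, abs_neg, abs_of_pos (by positivity)]
    have hb := bound_pow hx2 hy.le n 3 (by norm_num)
    nlinarith [hb]
  rw [tsum_neg] at key
  exact key

lemma hasDerivAt_Psi1 {x : ℝ} (hx : 0 < x) : HasDerivAt Psi1 (-(T2 x)) x := by
  refine (hasDerivAt_T1 hx).congr_of_eventuallyEq ?_
  filter_upwards [Ioi_mem_nhds hx] with y hy
  exact Psi1_eq hy

lemma T1_pos {x : ℝ} (hx : 0 < x) : 0 < T1 x := by
  refine Summable.tsum_pos (summable_T1 hx) (fun n => by positivity) 0 (by positivity)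

lemma T1_ge {x : ℝ} (hx : 0 < x) : (x ^ 2)⁻¹ ≤ T1 x := by
  have := Summable.le_tsum (summable_T1 hx) 0 (fun j _ => by positivity)
  simpa [T1] using this

lemma T1_anti {x y : ℝ} (hx : 0 < x) (hxy : x ≤ y) : T1 y ≤ T1 x := by
  refine Summable.tsum_le_tsum (fun n => ?_) (summable_T1 (lt_of_lt_of_le hx hxy)) (summable_T1 hx)
  have h1 : (0:ℝ) < x + n := by positivity
  refine inv_anti₀ (by positivity) (pow_le_pow_left₀ h1.le (by linarith) 2)

lemma T2_pos {x : ℝ} (hx : 0 < x) : 0 < T2 x := by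
  exact Summable.tsum_pos (summable_T2 hx) (fun n => by positivity) 0 (by positivity)




variable {α : ℝ}

/-- the derivative of `gfun α`. -/
noncomputable def gd (α x : ℝ) : ℝ :=
  (T2 (2*α - x) * Psi1 x - Psi1 (2*α - x) * -(T2 x)) / Psi1 x ^ 2

lemma mem_pos {x : ℝ} (hx : x ∈ Set.Ioo 0 (2*α)) : (0:ℝ) < x := hx.1
lemma mem_pos' {x : ℝ} (hx : x ∈ Set.Ioo 0 (2*α)) : (0:ℝ) < 2*α - x := by
  have := hx.2; linarith

lemma hasDerivAt_gfun {x : ℝ} (hx : x ∈ Set.Ioo 0 (2*α)) :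
    HasDerivAt (gfun α) (gd α x) x := by
  have hx1 := mem_pos hx
  have hx2 := mem_pos' hx
  have hnum : HasDerivAt (fun y : ℝ => Psi1 (2*α - y)) (T2 (2*α - x)) x := by
    have hinner : HasDerivAt (fun y : ℝ => 2*α - y) (-1) x := by
      simpa using (hasDerivAt_const x (2*α)).fun_sub (hasDerivAt_id x)
    have := (hasDerivAt_Psi1 hx2).comp x hinner
    refine this.congr_deriv ?_; ring
  have hden : HasDerivAt Psi1 (-(T2 x)) x := hasDerivAt_Psi1 hx1
  have hPne : Psi1 x ≠ 0 := by rw [Psi1_eq hx1]; exact (T1_pos hx1).ne'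
  exact hnum.div hden hPne

lemma gd_pos {x : ℝ} (hx : x ∈ Set.Ioo 0 (2*α)) : 0 < gd α x := by
  have hx1 := mem_pos hx
  have hx2 := mem_pos' hx
  rw [gd, Psi1_eq hx1, Psi1_eq hx2]
  have := T1_pos hx1; have := T1_pos hx2; have := T2_pos hx1; have := T2_pos hx2
  have hden : (0:ℝ) < T1 x ^ 2 := by positivity
  refine div_pos ?_ hden
  nlinarith

lemma gfun_pos {x : ℝ} (hx : x ∈ Set.Ioo 0 (2*α)) : 0 < gfun α x := by
  have hx1 := mem_pos hx
  have hx2 := mem_pos' hx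
  rw [gfun, Psi1_eq hx1, Psi1_eq hx2]
  exact div_pos (T1_pos hx2) (T1_pos hx1)

lemma continuousOn_gfun : ContinuousOn (gfun α) (Set.Ioo 0 (2*α)) :=
  fun x hx => (hasDerivAt_gfun hx).continuousAt.continuousWithinAt

lemma strictMonoOn_gfun : StrictMonoOn (gfun α) (Set.Ioo 0 (2*α)) := by
  refine strictMonoOn_of_deriv_pos (convex_Ioo _ _) continuousOn_gfun (fun x hx => ?_)
  rw [interior_Ioo] at hx
  rw [(hasDerivAt_gfun hx).deriv]
  exact gd_pos hx

lemma gfun_symm {x : ℝ} : gfun α (2*α - x) = (gfun α x)⁻¹ := by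
  rw [gfun, gfun]
  have h : 2*α - (2*α - x) = x := by ring
  rw [h, inv_div]

lemma gfun_le (hα : 0 < α) {x : ℝ} (hx : 0 < x) (hxa : x ≤ α) :
    gfun α x ≤ T1 α * x ^ 2 := by
  have hx2 : 0 < 2*α - x := by linarith
  rw [gfun, Psi1_eq hx, Psi1_eq hx2]
  have h1 : T1 (2*α - x) ≤ T1 α := T1_anti hα (by linarith)
  have h2 : (x ^ 2)⁻¹ ≤ T1 x := T1_ge hx
  have hT1x : 0 < T1 x := T1_pos hx
  rw [div_le_iff₀ hT1x]
  calc T1 (2*α - x) ≤ T1 α := h1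
  _ = T1 α * x ^ 2 * (x^2)⁻¹ := by field_simp
  _ ≤ T1 α * x ^ 2 * T1 x := by
      have : 0 < T1 α := T1_pos hα
      gcongr

/-- there is a point where `gfun` is less than `y`. -/
lemma exists_lt (hα : 0 < α) {y : ℝ} (hy : 0 < y) :
    ∃ a ∈ Set.Ioo 0 (2*α), gfun α a < y := by
  have hT : 0 < T1 α := T1_pos hα
  set ε := min α (Real.sqrt (y / (2 * T1 α))) with hε
  have hε0 : 0 < ε := lt_min hα (Real.sqrt_pos.mpr (by positivity))
  have hεα : ε ≤ α := min_le_left _ _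
  refine ⟨ε, ⟨hε0, by linarith⟩, ?_⟩
  have h1 : gfun α ε ≤ T1 α * ε ^ 2 := gfun_le hα hε0 hεα
  have h2 : ε ^ 2 ≤ y / (2 * T1 α) := by
    have h3 : ε ≤ Real.sqrt (y / (2 * T1 α)) := min_le_right _ _
    have := Real.sq_sqrt (le_of_lt (show (0:ℝ) < y / (2*T1 α) by positivity))
    nlinarith [Real.sqrt_nonneg (y / (2 * T1 α))]
  have : T1 α * ε ^ 2 ≤ y / 2 := by
    rw [le_div_iff₀ (by positivity : (0:ℝ) < 2 * T1 α)] at h2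
    nlinarith
  linarith

lemma exists_gt (hα : 0 < α) {y : ℝ} (hy : 0 < y) :
    ∃ b ∈ Set.Ioo 0 (2*α), y < gfun α b := by
  obtain ⟨a, ha, hlt⟩ := exists_lt hα (show (0:ℝ) < y⁻¹ by positivity)
  refine ⟨2*α - a, ⟨by linarith [ha.2], by linarith [ha.1]⟩, ?_⟩
  rw [gfun_symm]
  have hga : 0 < gfun α a := gfun_pos ha
  calc y = (y⁻¹)⁻¹ := by rw [inv_inv]
  _ < (gfun α a)⁻¹ := by
      exact inv_strictAnti₀ hga hlt

lemma gfun_surj (hα : 0 < α) {y : ℝ} (hy : 0 < y) :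
    ∃ x ∈ Set.Ioo 0 (2*α), gfun α x = y := by
  obtain ⟨a, ha, hlt⟩ := exists_lt hα hy
  obtain ⟨b, hb, hgt⟩ := exists_gt hα hy
  have hab : a < b := by
    by_contra h
    push_neg at h
    rcases eq_or_lt_of_le h with rfl | h
    · linarith
    · have := strictMonoOn_gfun hb ha h
      linarith
  have hIcc : Set.Icc a b ⊆ Set.Ioo 0 (2*α) := fun z hz =>
    ⟨lt_of_lt_of_le ha.1 hz.1, lt_of_le_of_lt hz.2 hb.2⟩
  have := intermediate_value_Icc hab.le (continuousOn_gfun.mono hIcc)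
  obtain ⟨x, hx, hxy⟩ := this ⟨hlt.le, hgt.le⟩
  exact ⟨x, hIcc hx, hxy⟩




variable {α : ℝ} (hα : 0 < α)

lemma ginv_mem {x : ℝ} (hα : 0 < α) (hx : 0 < x) : ginv α x ∈ Set.Ioo 0 (2*α) := by
  obtain ⟨a, ha, hax⟩ := gfun_surj hα hx
  exact Function.invFunOn_mem ⟨a, ha, hax⟩

lemma gfun_ginv {x : ℝ} (hα : 0 < α) (hx : 0 < x) : gfun α (ginv α x) = x := by
  obtain ⟨a, ha, hax⟩ := gfun_surj hα hx
  exact Function.invFunOn_eq ⟨a, ha, hax⟩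

lemma ginv_lt_ginv {x y : ℝ} (hα : 0 < α) (hx : 0 < x) (hxy : x < y) :
    ginv α x < ginv α y := by
  have hy : 0 < y := lt_trans hx hxy
  have h1 := ginv_mem hα hx
  have h2 := ginv_mem hα hy
  rcases lt_trichotomy (ginv α x) (ginv α y) with h | h | h
  · exact h
  · rw [← gfun_ginv hα hx, ← gfun_ginv hα hy, h] at hxy; linarith
  · have := strictMonoOn_gfun h2 h1 h
    rw [gfun_ginv hα hx, gfun_ginv hα hy] at this
    linarith

lemma continuousAt_ginv {x : ℝ} (hα : 0 < α) (hx : 0 < x) : ContinuousAt (ginv α) x := by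
  rw [Metric.continuousAt_iff]
  intro ε hε
  set b := ginv α x with hb
  have hbI : b ∈ Set.Ioo 0 (2*α) := ginv_mem hα hx
  set ε' := min ε (min (b/2) ((2*α - b)/2)) with hε'
  have hε'0 : 0 < ε' := by
    refine lt_min hε (lt_min (by linarith [hbI.1]) (by linarith [hbI.2]))
  have hε'ε : ε' ≤ ε := min_le_left _ _
  have hmemlo : b - ε' ∈ Set.Ioo 0 (2*α) := by
    constructor
    · have : ε' ≤ b/2 := le_trans (min_le_right _ _) (min_le_left _ _)
      linarith [hbI.1]
    · linarith [hbI.2]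
  have hmemhi : b + ε' ∈ Set.Ioo 0 (2*α) := by
    constructor
    · linarith [hbI.1]
    · have : ε' ≤ (2*α - b)/2 := le_trans (min_le_right _ _) (min_le_right _ _)
      linarith [hbI.2]
  have hglo : gfun α (b - ε') < x := by
    have := strictMonoOn_gfun hmemlo hbI (by linarith)
    rwa [hb, gfun_ginv hα hx] at this
  have hghi : x < gfun α (b + ε') := by
    have := strictMonoOn_gfun hbI hmemhi (by linarith)
    rwa [hb, gfun_ginv hα hx] at this
  refine ⟨min (x - gfun α (b - ε')) (gfun α (b + ε') - x), by
    refine lt_min (by linarith) (by linarith), fun {y} hy => ?_⟩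
  rw [Real.dist_eq, abs_lt] at hy
  have hy1 : gfun α (b - ε') < y := by
    have := hy.1
    have h2 := min_le_left (x - gfun α (b - ε')) (gfun α (b + ε') - x)
    linarith
  have hy2 : y < gfun α (b + ε') := by
    have := hy.2
    have h2 := min_le_right (x - gfun α (b - ε')) (gfun α (b + ε') - x)
    linarith
  have hy0 : 0 < y := lt_trans (gfun_pos hmemlo) hy1
  have hyI : ginv α y ∈ Set.Ioo 0 (2*α) := ginv_mem hα hy0
  -- ginv α y ∈ (b - ε', b + ε')
  have hlow : b - ε' < ginv α y := by
    by_contra h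
    push_neg at h
    have := strictMonoOn_gfun.monotoneOn hyI hmemlo h
    rw [gfun_ginv hα hy0] at this
    linarith
  have hhigh : ginv α y < b + ε' := by
    by_contra h
    push_neg at h
    have := strictMonoOn_gfun.monotoneOn hmemhi hyI h
    rw [gfun_ginv hα hy0] at this
    linarith
  rw [Real.dist_eq, abs_lt]
  constructor <;> [linarith; linarith]

lemma hasDerivAt_ginv {x : ℝ} (hα : 0 < α) (hx : 0 < x) :
    HasDerivAt (ginv α) (gd α (ginv α x))⁻¹ x := by
  have hbI := ginv_mem hα hx
  refine HasDerivAt.of_local_left_inverse (continuousAt_ginv hα hx)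
    (hasDerivAt_gfun hbI) (gd_pos hbI).ne' ?_
  filter_upwards [Ioi_mem_nhds hx] with y hy
  exact gfun_ginv hα hy

theorem f_derivative_aux (α : ℝ) (hα : 0 < α) :
    ∀ x ∈ Set.Ioi (0 : ℝ), HasDerivAt (fShape α) (Psi0 (ginv α x)) x := by
  intro x hx
  have hx0 : (0:ℝ) < x := hx
  set b := ginv α x with hb
  have hbI : b ∈ Set.Ioo 0 (2*α) := ginv_mem hα hx0
  have hb1 : 0 < b := hbI.1
  have hb2 : 0 < 2*α - b := by linarith [hbI.2]
  set m := (gd α b)⁻¹ with hm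
  have Hh : HasDerivAt (ginv α) m x := hasDerivAt_ginv hα hx0
  have H1 : HasDerivAt (fun y => Psi0 (ginv α y)) (T1 b * m) x :=
    (hasDerivAt_Psi0 hb1).comp x Hh
  have H2 : HasDerivAt (fun y => y * Psi0 (ginv α y))
      (1 * Psi0 b + x * (T1 b * m)) x := (hasDerivAt_id x).mul H1
  have Hinner : HasDerivAt (fun y => 2*α - ginv α y) (-m) x := by
    simpa using (hasDerivAt_const x (2*α)).fun_sub Hh
  have H3 : HasDerivAt (fun y => Psi0 (2*α - ginv α y)) (T1 (2*α - b) * -m) x :=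
    (hasDerivAt_Psi0 hb2).comp x Hinner
  have Htot := H2.fun_add H3
  have hkey : x * T1 b = T1 (2*α - b) := by
    have hg : gfun α b = x := gfun_ginv hα hx0
    rw [gfun, Psi1_eq hb1, Psi1_eq hb2] at hg
    rw [div_eq_iff (T1_pos hb1).ne'] at hg
    linarith [hg]
  have hder : 1 * Psi0 b + x * (T1 b * m) + T1 (2*α - b) * -m = Psi0 b := by
    rw [← hkey]; ring
  rw [hder] at Htot
  refine Htot.congr_of_eventuallyEq ?_
  filter_upwards [Ioi_mem_nhds hx0] with y hy
  rw [fShape, if_neg (ne_of_gt hy)]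


end PsiAux
end PsiAuxSection

open Real in
/-- `f` is differentiable on `(0, ∞)` with `f'(x) = Ψ₀(g⁻¹(x))`. -/
theorem f_derivative (α : ℝ) (hα : 0 < α) :
    ∀ x ∈ Set.Ioi (0 : ℝ), HasDerivAt (fShape α) (Psi0 (ginv α x)) x :=
  PsiAux.f_derivative_aux α hα
end

section
/- Fix α > 0 and let λ be a real number with 0 < λ < min{1, 2α}. Then for all integers N, T ≥ 1 and every real u, P( log Z^full(N,T) ≥ u ) ≤ exp( −λ·u + log binom(N+T−2, N−1) + (N+T−1)·log( Γ(2α−λ)/Γ(2α) ) ). -/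
open MeasureTheory ProbabilityTheory Real

namespace ChernoffAux

open Finset MeasureTheory ProbabilityTheory Real

theorem count_true_add_count_false (l : List Bool) :
    l.count true + l.count false = l.length := by
  induction l with
  | nil => simp
  | cons hd tl ih => cases hd <;> simp [List.count_cons] <;> omega

theorem card_count_eq (n k : ℕ) :
    (Finset.univ.filter (fun s : Fin n → Bool => (List.ofFn s).count true = k)).card
      = n.choose k := by
  have h : ∀ s : Fin n → Bool, (List.ofFn s).count true
      = (Finset.univ.filter (fun i => s i = true)).card := by
    intro s
    rw [List.ofFn_eq_map, List.count_eq_countP, List.countP_map, Finset.card_filter,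
      ← List.sum_ofFn, List.ofFn_eq_map]
    induction List.finRange n with
    | nil => simp
    | cons hd tl ih =>
        rw [List.countP_cons, List.map_cons, List.sum_cons, ih]
        cases hh : s hd <;> simp [hh, Function.comp, add_comm]
  rw [show n.choose k = (Finset.powersetCard k (univ : Finset (Fin n))).card by
    simp [Finset.card_powersetCard]]
  apply Finset.card_bij' (fun s _ => Finset.univ.filter (fun i => s i = true))
    (fun A _ => fun i => decide (i ∈ A))
  · intro s hs
    funext i
    simp only [Finset.mem_filter, Finset.mem_univ, true_and]
    cases hh : s i <;> simp [hh]
  · intro A hA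
    ext i
    simp
  · intro s hs
    simp only [Finset.mem_filter, Finset.mem_univ, true_and] at hs
    rw [Finset.mem_powersetCard]
    exact ⟨Finset.filter_subset _ _ |>.trans (by simp), by rw [← h s, hs]⟩
  · intro A hA
    rw [Finset.mem_powersetCard] at hA
    simp only [Finset.mem_filter, Finset.mem_univ, true_and]
    rw [h, show (Finset.univ.filter (fun i => decide (i ∈ A) = true)) = A by ext i; simp]
    exact hA.2

theorem vert_coord_sum (a : ℤ × ℤ) {n : ℕ} (s : Fin n → Bool) (k : ℕ) :
    (vert a s k).1 + (vert a s k).2 = a.1 + a.2 + min k n := by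
  have h := count_true_add_count_false ((List.ofFn s).take k)
  have hlen : ((List.ofFn s).take k).length = min k n := by
    simp [List.length_take]
  rw [hlen] at h
  simp only [vert]
  push_cast [← h]
  ring

theorem vert_injOn (a : ℤ × ℤ) {n : ℕ} (s : Fin n → Bool) :
    Set.InjOn (vert a s) (Finset.range (n+1)) := by
  intro x hx y hy hxy
  simp only [Finset.coe_range, Set.mem_Iio] at hx hy
  have := congrArg (fun p : ℤ × ℤ => p.1 + p.2) hxy
  simp only [vert_coord_sum] at this
  omega

theorem mem_pathSet_iff {a b : ℤ × ℤ} (s : Fin (numSteps a b) → Bool) :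
    s ∈ pathSet a b ↔ vert a s (numSteps a b) = b := by
  simp [pathSet]

theorem numSteps_eq (N T : ℕ) (hN : 1 ≤ N) (hT : 1 ≤ T) :
    numSteps (1, 1) ((N : ℤ), (T : ℤ)) = N + T - 2 := by
  simp only [numSteps]
  omega

theorem vert_full (a : ℤ × ℤ) {n : ℕ} (s : Fin n → Bool) :
    vert a s n = (a.1 + (List.ofFn s).count true, a.2 + (List.ofFn s).count false) := by
  have ht : (List.ofFn s).take n = List.ofFn s :=
    List.take_of_length_le (le_of_eq (List.length_ofFn (f := s)))
  simp only [vert, ht]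

theorem mem_pathSet_iff_count (N T : ℕ) (hN : 1 ≤ N) (hT : 1 ≤ T)
    (s : Fin (numSteps (1, 1) ((N : ℤ), (T : ℤ))) → Bool) :
    s ∈ pathSet (1, 1) ((N : ℤ), (T : ℤ)) ↔ (List.ofFn s).count true = N - 1 := by
  rw [mem_pathSet_iff, vert_full]
  have hn : numSteps (1, 1) ((N : ℤ), (T : ℤ)) = N + T - 2 := numSteps_eq N T hN hT
  have h := count_true_add_count_false (List.ofFn s)
  rw [List.length_ofFn] at h
  constructor
  · intro hb
    have h1 : (1 : ℤ) + (List.ofFn s).count true = N := congrArg Prod.fst hb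
    omega
  · intro hc
    have hf : (List.ofFn s).count false = T - 1 := by omega
    rw [hc, hf]
    ext <;> push_cast <;> omega

theorem card_pathSet (N T : ℕ) (hN : 1 ≤ N) (hT : 1 ≤ T) :
    (pathSet (1, 1) ((N : ℤ), (T : ℤ))).card = (N + T - 2).choose (N - 1) := by
  rw [show pathSet (1, 1) ((N : ℤ), (T : ℤ))
      = Finset.univ.filter (fun s => (List.ofFn s).count true = N - 1) by
    ext s
    rw [mem_pathSet_iff_count N T hN hT]
    simp]
  rw [card_count_eq, numSteps_eq N T hN hT]

theorem pathSet_nonempty (N T : ℕ) (hN : 1 ≤ N) (hT : 1 ≤ T) :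
    (pathSet (1, 1) ((N : ℤ), (T : ℤ))).Nonempty := by
  rw [← Finset.card_pos, card_pathSet N T hN hT]
  exact Nat.choose_pos (by omega)


theorem gamma_lintegral_rpow {β l : ℝ} (hβ : 0 < β) (hl : 0 < l) (hlβ : l < β) :
    ∫⁻ y, ENNReal.ofReal (|y| ^ (-l)) ∂(gammaMeasure β 1)
      = ENNReal.ofReal (Real.Gamma (β - l) / Real.Gamma β) := by
  have hmeas : Measurable fun y : ℝ => ENNReal.ofReal (|y| ^ (-l)) :=
    ENNReal.measurable_ofReal.comp (measurable_id.abs.pow measurable_const)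
  have hpdf : Measurable (gammaPDF β 1) := (measurable_gammaPDFReal β 1).ennreal_ofReal
  rw [gammaMeasure, lintegral_withDensity_eq_lintegral_mul _ hpdf hmeas]
  -- split into Set.Iio 0 and Set.Ici 0
  rw [← lintegral_add_compl (μ := volume) _ (measurableSet_Ici (a := (0:ℝ)))]
  have left : ∫⁻ y in (Set.Ici (0:ℝ))ᶜ, (gammaPDF β 1 *
      fun y => ENNReal.ofReal (|y| ^ (-l))) y = 0 := by
    rw [Set.compl_Ici]
    rw [setLIntegral_congr_fun measurableSet_Iio
      (fun x (hx : x < 0) => ?_), lintegral_zero]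
    simp only [Pi.mul_apply]
    rw [gammaPDF_of_neg hx]
    simp
  have hIci : volume.restrict (Set.Ici (0:ℝ)) = volume.restrict (Set.Ioi 0) := by
    rw [restrict_Ioi_eq_restrict_Ici]
  have right : ∫⁻ y in Set.Ici (0:ℝ), (gammaPDF β 1 *
      fun y => ENNReal.ofReal (|y| ^ (-l))) y
      = ENNReal.ofReal ((Real.Gamma β)⁻¹) *
        ∫⁻ y in Set.Ioi (0:ℝ), ENNReal.ofReal (y ^ (β - l - 1) * Real.exp (-(1*y))) := by
    rw [hIci, ← lintegral_const_mul _ (by fun_prop)]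
    apply setLIntegral_congr_fun measurableSet_Ioi
    intro y hy
    have hy' : (0:ℝ) < y := hy
    simp only [Pi.mul_apply]
    rw [gammaPDF_of_nonneg hy'.le, abs_of_pos hy']
    rw [← ENNReal.ofReal_mul (by positivity), ← ENNReal.ofReal_mul (by positivity)]
    congr 1
    rw [one_rpow]
    rw [show y ^ (β - l - 1) = y ^ (β - 1) * y ^ (-l) by
      rw [← Real.rpow_add hy']; ring_nf]
    field_simp
  have key : ∫⁻ y in Set.Ioi (0:ℝ), ENNReal.ofReal (y ^ (β - l - 1) * Real.exp (-(1*y)))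
      = ENNReal.ofReal (Real.Gamma (β - l)) := by
    have hint : IntegrableOn (fun y : ℝ => y ^ (β - l - 1) * Real.exp (-(1*y))) (Set.Ioi 0) := by
      have := Real.GammaIntegral_convergent (s := β - l) (by linarith)
      apply this.congr_fun _ measurableSet_Ioi
      intro x hx
      simp [mul_comm]
    rw [← ofReal_integral_eq_lintegral_ofReal hint]
    · rw [integral_rpow_mul_exp_neg_mul_Ioi (by linarith) one_pos]
      norm_num
    · apply (ae_restrict_iff' measurableSet_Ioi).mpr
      apply ae_of_all
      intro y hy
      have : (0:ℝ) < y := hy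
      positivity
  rw [left, right, key, add_zero, ← ENNReal.ofReal_mul (by positivity)]
  rw [inv_mul_eq_div]

theorem abs_rpow_eq (x l : ℝ) (hl : l ≠ 0) : |x| ^ l = |x⁻¹| ^ (-l) := by
  rcases eq_or_ne x 0 with rfl | hx
  · simp [Real.zero_rpow hl, Real.zero_rpow (neg_ne_zero.mpr hl)]
  · rw [abs_inv, Real.inv_rpow (abs_nonneg x), Real.rpow_neg (abs_nonneg x), inv_inv]

theorem invGamma_moment {Ω : Type*} [MeasurableSpace Ω] (μ : Measure Ω) {X : Ω → ℝ}
    {β l : ℝ} (hβ : 0 < β) (hl : 0 < l) (hlβ : l < β)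
    (hX : Measurable X)
    (hmap : Measure.map (fun ω => (X ω)⁻¹) μ = gammaMeasure β 1) :
    ∫⁻ ω, ENNReal.ofReal (|X ω| ^ l) ∂μ = ENNReal.ofReal (Real.Gamma (β - l) / Real.Gamma β) := by
  have hmeas : Measurable fun y : ℝ => ENNReal.ofReal (|y| ^ (-l)) :=
    ENNReal.measurable_ofReal.comp (measurable_id.abs.pow measurable_const)
  calc ∫⁻ ω, ENNReal.ofReal (|X ω| ^ l) ∂μ
      = ∫⁻ ω, ENNReal.ofReal (|(X ω)⁻¹| ^ (-l)) ∂μ := by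
        congr 1; funext ω; rw [abs_rpow_eq _ _ hl.ne']
    _ = ∫⁻ y, ENNReal.ofReal (|y| ^ (-l)) ∂(Measure.map (fun ω => (X ω)⁻¹) μ) := by
        rw [lintegral_map hmeas (show Measurable (fun ω => (X ω)⁻¹) from hX.inv)]
    _ = ENNReal.ofReal (Real.Gamma (β - l) / Real.Gamma β) := by
        rw [hmap, gamma_lintegral_rpow hβ hl hlβ]

theorem invGamma_pos {Ω : Type*} [MeasurableSpace Ω] (μ : Measure Ω) {X : Ω → ℝ}
    {β : ℝ} (hX : Measurable X)
    (hmap : Measure.map (fun ω => (X ω)⁻¹) μ = gammaMeasure β 1) :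
    μ {ω | ¬ 0 < X ω} = 0 := by
  have hsub : {ω | ¬ 0 < X ω} ⊆ (fun ω => (X ω)⁻¹) ⁻¹' (Set.Iic 0) := by
    intro ω hω
    simp only [Set.mem_setOf_eq, not_lt] at hω
    exact inv_nonpos.mpr hω
  refine measure_mono_null hsub ?_
  have : μ ((fun ω => (X ω)⁻¹) ⁻¹' (Set.Iic 0))
      = Measure.map (fun ω => (X ω)⁻¹) μ (Set.Iic 0) := by
    rw [Measure.map_apply (show Measurable (fun ω => (X ω)⁻¹) from hX.inv) measurableSet_Iic]
  rw [this, hmap, gammaMeasure, withDensity_apply _ measurableSet_Iic]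
  have hsplit : Set.Iic (0:ℝ) ⊆ Set.Iio 0 ∪ {0} := by
    intro x hx
    rcases lt_or_eq_of_le (Set.mem_Iic.mp hx) with h | h
    · exact Or.inl h
    · exact Or.inr (by simp [h])
  refine le_antisymm ?_ (by simp)
  calc ∫⁻ y in Set.Iic (0:ℝ), gammaPDF β 1 y
      ≤ ∫⁻ y in (Set.Iio 0 ∪ {0} : Set ℝ), gammaPDF β 1 y :=
        lintegral_mono_set hsplit
    _ ≤ (∫⁻ y in Set.Iio (0:ℝ), gammaPDF β 1 y) + ∫⁻ y in ({0} : Set ℝ), gammaPDF β 1 y :=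
        lintegral_union_le _ _ _
    _ = 0 := by
        rw [lintegral_gammaPDF_of_nonpos le_rfl,
          setLIntegral_measure_zero _ _ (by simp), add_zero]


theorem lintegral_prod_of_iIndep {Ω : Type*} {ι : Type*} [MeasurableSpace Ω]
    (μ : Measure Ω) [IsProbabilityMeasure μ] {Y : ι → Ω → ENNReal}
    (h : iIndepFun Y μ) (hm : ∀ i, Measurable (Y i)) :
    ∀ s : Finset ι, ∫⁻ ω, ∏ i ∈ s, Y i ω ∂μ = ∏ i ∈ s, ∫⁻ ω, Y i ω ∂μ := by
  intro s
  classical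
  induction s using Finset.induction_on with
  | empty => simp
  | @insert i s his ih =>
      have hmp : Measurable (∏ j ∈ s, Y j) := by
        rw [Finset.prod_fn]
        exact Finset.measurable_prod _ (fun j _ => hm j)
      have hind : IndepFun (∏ j ∈ s, Y j) (Y i) μ :=
        h.indepFun_finsetProd_of_notMem hm his
      have key := lintegral_mul_eq_lintegral_mul_lintegral_of_indepFun hmp (hm i) hind
      simp only [Finset.prod_apply, Pi.mul_apply] at key
      calc ∫⁻ ω, ∏ j ∈ insert i s, Y j ω ∂μ
          = ∫⁻ ω, (∏ j ∈ s, Y j ω) * Y i ω ∂μ := by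
            congr 1; funext ω; rw [Finset.prod_insert his, mul_comm]
        _ = (∫⁻ ω, ∏ j ∈ s, Y j ω ∂μ) * ∫⁻ ω, Y i ω ∂μ := key
        _ = ∏ j ∈ insert i s, ∫⁻ ω, Y j ω ∂μ := by
            rw [ih, Finset.prod_insert his, mul_comm]

theorem ennreal_sum_rpow_le {ι : Type*} (s : Finset ι) (f : ι → ENNReal) {p : ℝ}
    (hp : 0 < p) (hp1 : p ≤ 1) :
    (∑ i ∈ s, f i) ^ p ≤ ∑ i ∈ s, f i ^ p := by
  classical
  induction s using Finset.induction_on with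
  | empty => simp [ENNReal.zero_rpow_of_pos hp]
  | @insert i s his ih =>
      rw [Finset.sum_insert his, Finset.sum_insert his]
      calc (f i + ∑ j ∈ s, f j) ^ p ≤ f i ^ p + (∑ j ∈ s, f j) ^ p :=
            ENNReal.rpow_add_le_add_rpow _ _ hp.le hp1
        _ ≤ f i ^ p + ∑ j ∈ s, f j ^ p := add_le_add_right ih _

theorem ofReal_prod {ι : Type*} (s : Finset ι) (f : ι → ℝ) (hf : ∀ i ∈ s, 0 ≤ f i) :
    ENNReal.ofReal (∏ i ∈ s, f i) = ∏ i ∈ s, ENNReal.ofReal (f i) := by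
  classical
  induction s using Finset.induction_on with
  | empty => simp
  | @insert i s his ih =>
      rw [Finset.prod_insert his, Finset.prod_insert his,
        ENNReal.ofReal_mul (hf i (Finset.mem_insert_self i s)),
        ih (fun j hj => hf j (Finset.mem_insert_of_mem hj))]

theorem ennreal_prod_rpow {ι : Type*} (s : Finset ι) (f : ι → ENNReal) {p : ℝ} (hp : 0 ≤ p) :
    (∏ i ∈ s, f i) ^ p = ∏ i ∈ s, f i ^ p := by
  classical
  induction s using Finset.induction_on with
  | empty => simp [ENNReal.rpow_natCast]
  | @insert i s his ih =>
      rw [Finset.prod_insert his, Finset.prod_insert his,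
        ENNReal.mul_rpow_of_nonneg _ _ hp, ih]

end ChernoffAux

open MeasureTheory ProbabilityTheory Real in
/-- Chernoff-type upper-tail bound for the full-space log-gamma free energy. -/
theorem chernoff_upper_tail
    {Ω : Type*} [MeasurableSpace Ω] (μ : Measure Ω) [IsProbabilityMeasure μ]
    (α l : ℝ) (hα : 0 < α) (hl : 0 < l) (hl' : l < min 1 (2 * α))
    (W : ℤ × ℤ → Ω → ℝ)
    (hindep : iIndepFun W μ)
    (hlaw : ∀ v : ℤ × ℤ, IsInvGamma μ (W v) (2 * α)) :
    ∀ N T : ℕ, 1 ≤ N → 1 ≤ T → ∀ u : ℝ,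
      μ {ω | u ≤ Real.log (Zfull (fun v => W v ω) (1, 1) ((N : ℤ), (T : ℤ)))} ≤
        ENNReal.ofReal (Real.exp (-l * u + Real.log (Nat.choose (N + T - 2) (N - 1))
          + ((N : ℝ) + T - 1) * Real.log (Real.Gamma (2 * α - l) / Real.Gamma (2 * α)))) := by
  classical
  intro N T hN hT u
  have hWmeas : ∀ v, Measurable (W v) := fun v => (hlaw v).1
  have hWmap : ∀ v : ℤ × ℤ, Measure.map (fun ω => (W v ω)⁻¹) μ = gammaMeasure (2*α) 1 :=
    fun v => (hlaw v).2
  have hl1 : l ≤ 1 := le_of_lt (lt_of_lt_of_le hl' (min_le_left _ _))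
  have hl2 : l < 2*α := lt_of_lt_of_le hl' (min_le_right _ _)
  have h2α : 0 < 2*α := by linarith
  set a : ℤ × ℤ := (1, 1) with ha
  set b : ℤ × ℤ := ((N : ℤ), (T : ℤ)) with hb
  have hn : numSteps a b = N + T - 2 := ChernoffAux.numSteps_eq N T hN hT
  set n : ℕ := numSteps a b with hndef
  set ratio : ℝ := Real.Gamma (2*α - l) / Real.Gamma (2*α) with hratio
  have hratiopos : 0 < ratio := by
    apply div_pos (Real.Gamma_pos_of_pos (by linarith)) (Real.Gamma_pos_of_pos h2α)
  set C : ℕ := (N + T - 2).choose (N - 1) with hC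
  have hCcard : (pathSet a b).card = C := ChernoffAux.card_pathSet N T hN hT
  have hCpos : 0 < C := Nat.choose_pos (by omega)
  -- the transformed weights
  set Y : ℤ × ℤ → Ω → ENNReal := fun v ω => ENNReal.ofReal (|W v ω| ^ l) with hY
  have hYmeas : ∀ v, Measurable (Y v) := fun v =>
    ENNReal.measurable_ofReal.comp ((hWmeas v).abs.pow measurable_const)
  have hYindep : iIndepFun Y μ :=
    hindep.comp (fun _ x => ENNReal.ofReal (|x| ^ l))
      (fun _ => ENNReal.measurable_ofReal.comp (measurable_id.abs.pow measurable_const))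
  set M : Ω → ENNReal :=
    fun ω => ∑ s ∈ pathSet a b, ∏ k ∈ Finset.range (n+1), Y (vert a s k) ω with hM
  have hMmeas : Measurable M :=
    Finset.measurable_sum _ (fun s _ => Finset.measurable_prod _ (fun k _ => hYmeas _))
  -- positivity event
  set V : Finset (ℤ × ℤ) :=
    (pathSet a b).biUnion (fun s => (Finset.range (n+1)).image (vert a s)) with hV
  set G : Set Ω := {ω | ∀ v ∈ V, 0 < W v ω} with hG
  have hGnull : μ Gᶜ = 0 := by
    have hsub : Gᶜ ⊆ ⋃ v ∈ (V : Set (ℤ × ℤ)), {ω | ¬ 0 < W v ω} := by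
      intro ω hω
      simp only [hG, Set.mem_compl_iff, Set.mem_setOf_eq, not_forall] at hω
      obtain ⟨v, hv, hpos⟩ := hω
      exact Set.mem_biUnion hv hpos
    refine measure_mono_null hsub ?_
    rw [measure_biUnion_null_iff (V.countable_toSet)]
    intro v _
    exact ChernoffAux.invGamma_pos μ (hWmeas v) (hWmap v)
  -- pointwise bound on the event
  set E : Set Ω := {ω | u ≤ Real.log (Zfull (fun v => W v ω) a b)} with hE
  have hincl : E ∩ G ⊆ {ω | ENNReal.ofReal (Real.exp (l * u)) ≤ M ω} := by
    rintro ω ⟨hu, hpos⟩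
    simp only [hE, Set.mem_setOf_eq] at hu
    simp only [hG, Set.mem_setOf_eq] at hpos
    set w : ℤ × ℤ → ℝ := fun v => W v ω with hw
    have hwpos : ∀ s ∈ pathSet a b, ∀ k ∈ Finset.range (n+1), 0 < w (vert a s k) := by
      intro s hs k hk
      refine hpos _ (Finset.mem_biUnion.mpr ⟨s, hs, Finset.mem_image_of_mem _ hk⟩)
    have hpwpos : ∀ s ∈ pathSet a b, 0 < pathWeight w a s := by
      intro s hs
      exact Finset.prod_pos (fun k hk => hwpos s hs k hk)
    have hZpos : 0 < Zfull w a b :=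
      Finset.sum_pos hpwpos (ChernoffAux.pathSet_nonempty N T hN hT)
    have h1 : Real.exp u ≤ Zfull w a b := by
      rw [← Real.exp_log hZpos]
      exact Real.exp_le_exp.mpr hu
    simp only [Set.mem_setOf_eq]
    calc ENNReal.ofReal (Real.exp (l * u))
        = ENNReal.ofReal (Real.exp u) ^ l := by
          rw [ENNReal.ofReal_rpow_of_pos (Real.exp_pos u), ← Real.exp_mul, mul_comm]
      _ ≤ ENNReal.ofReal (Zfull w a b) ^ l :=
          ENNReal.rpow_le_rpow (ENNReal.ofReal_le_ofReal h1) hl.le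
      _ = (∑ s ∈ pathSet a b, ENNReal.ofReal (pathWeight w a s)) ^ l := by
          rw [Zfull, ENNReal.ofReal_sum_of_nonneg (fun s hs => (hpwpos s hs).le)]
      _ ≤ ∑ s ∈ pathSet a b, ENNReal.ofReal (pathWeight w a s) ^ l :=
          ChernoffAux.ennreal_sum_rpow_le _ _ hl hl1
      _ = M ω := by
          apply Finset.sum_congr rfl
          intro s hs
          rw [pathWeight, ChernoffAux.ofReal_prod _ _ (fun k hk => (hwpos s hs k hk).le),
            ChernoffAux.ennreal_prod_rpow _ _ hl.le]
          apply Finset.prod_congr rfl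
          intro k hk
          have hp := hwpos s hs k hk
          rw [ENNReal.ofReal_rpow_of_pos hp]
          simp only [hY]
          conv_rhs => rw [show |W (vert a s k) ω| = w (vert a s k) from abs_of_pos hp]
  -- the expectation of M
  have hintY : ∀ v : ℤ × ℤ, ∫⁻ ω, Y v ω ∂μ = ENNReal.ofReal ratio := by
    intro v
    exact ChernoffAux.invGamma_moment μ h2α hl hl2 (hWmeas v) (hWmap v)
  have hintM : ∫⁻ ω, M ω ∂μ = (C : ENNReal) * ENNReal.ofReal ratio ^ (n+1) := by
    rw [hM]
    rw [lintegral_finset_sum _ (fun s _ => Finset.measurable_prod _ (fun k _ => hYmeas _))]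
    have hterm : ∀ s ∈ pathSet a b,
        ∫⁻ ω, ∏ k ∈ Finset.range (n+1), Y (vert a s k) ω ∂μ
          = ENNReal.ofReal ratio ^ (n+1) := by
      intro s hs
      have hinj := ChernoffAux.vert_injOn a s (n := n)
      have hre : ∀ ω, ∏ k ∈ Finset.range (n+1), Y (vert a s k) ω
          = ∏ v ∈ (Finset.range (n+1)).image (vert a s), Y v ω := by
        intro ω
        rw [Finset.prod_image]
        intro x hx y hy hxy
        exact hinj (by simpa using hx) (by simpa using hy) hxy
      simp_rw [hre]
      rw [ChernoffAux.lintegral_prod_of_iIndep μ hYindep hYmeas]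
      rw [Finset.prod_congr rfl (fun v _ => hintY v), Finset.prod_const]
      congr 1
      rw [Finset.card_image_of_injOn (fun x hx y hy hxy =>
        hinj (by simpa using hx) (by simpa using hy) hxy), Finset.card_range]
    rw [Finset.sum_congr rfl hterm, Finset.sum_const, hCcard, nsmul_eq_mul]
  -- Markov inequality
  have hε0 : ENNReal.ofReal (Real.exp (l * u)) ≠ 0 := by
    simp [Real.exp_pos]
  have hεtop : ENNReal.ofReal (Real.exp (l * u)) ≠ ⊤ := ENNReal.ofReal_ne_top
  have markov := meas_ge_le_lintegral_div hMmeas.aemeasurable hε0 hεtop (μ := μ) (f := M)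
  -- assemble
  have hme : μ E ≤ μ (E ∩ G) := by
    calc μ E ≤ μ ((E ∩ G) ∪ Gᶜ) := measure_mono (fun ω hω => by
          by_cases hg : ω ∈ G
          · exact Or.inl ⟨hω, hg⟩
          · exact Or.inr hg)
      _ ≤ μ (E ∩ G) + μ Gᶜ := measure_union_le _ _
      _ = μ (E ∩ G) := by rw [hGnull, add_zero]
  have hfinal : μ E ≤ ((C : ENNReal) * ENNReal.ofReal ratio ^ (n+1)) /
      ENNReal.ofReal (Real.exp (l * u)) := by
    refine hme.trans ((measure_mono hincl).trans ?_)
    rw [← hintM]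
    exact markov
  refine hfinal.trans (le_of_eq ?_)
  -- final arithmetic
  have hm : ((N : ℝ) + T - 1) = ((n + 1 : ℕ) : ℝ) := by
    have h1 : n + 1 = N + T - 1 := by omega
    rw [h1, Nat.cast_sub (by omega)]
    push_cast
    ring
  have hCreal : (0:ℝ) < (C : ℝ) := by exact_mod_cast hCpos
  have hrhs : Real.exp (-l * u + Real.log (C : ℝ) + ((N : ℝ) + T - 1) * Real.log ratio)
      = Real.exp (-(l * u)) * (C : ℝ) * ratio ^ (n+1) := by
    rw [Real.exp_add, Real.exp_add, Real.exp_log hCreal, hm, Real.exp_nat_mul,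
      Real.exp_log hratiopos, neg_mul]
  rw [hrhs, ENNReal.ofReal_mul (by positivity), ENNReal.ofReal_mul (Real.exp_pos _).le,
    ENNReal.ofReal_pow hratiopos.le]
  rw [div_eq_mul_inv, ← ENNReal.ofReal_inv_of_pos (Real.exp_pos _), ← Real.exp_neg]
  rw [ENNReal.ofReal_natCast]
  ring
end
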